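/- arXiv:0807.2155 — 5 statements merged into one kernel-verified Lean document; each statement's English description precedes it below -/
import Mathlib

section
/- Fix a real number q with 0 < q < 1. For every X ∈ ℂ and every Λ ∈ ℂ with Λ ≠ 0, the series ∑_{n=0}^∞ q^{n²/4} · Xⁿ · P̄_n(Λ) / ∏_{j=1}^n (1 − qʲ) defining the global q-Whittaker function Ψ̃(X, Λ) of type A₁ converges absolutely. (Theorem 3.2(i) of the paper in the rank-one case.) -/
open scoped BigOperators
open Filter

noncomputable section

/-- Symmetric monomial `M_r(X) = X^r + X^{-r}` for `r ≥ 1`, `M_0 = 1`. -/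
def Msym (r : ℕ) (X : ℂ) : ℂ := if r = 0 then 1 else X ^ r + X⁻¹ ^ r

/-- Continuous q-Hermite Laurent polynomial (Macdonald polynomial of type A₁ at t = 0). -/
def PbarA1 (q : ℝ) (n : ℕ) (X : ℂ) : ℂ :=
  Msym n X + ∑ j ∈ Finset.Icc 1 (n / 2),
    (∏ i ∈ Finset.range j, (1 - (q : ℂ) ^ (n - i)) / (1 - (q : ℂ) ^ (i + 1))) *
      Msym (n - 2 * j) X

/-- Global q-Whittaker function of type A₁. -/
def whitA1 (q : ℝ) (X Λ : ℂ) : ℂ :=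
  ∑' n : ℕ, ((q ^ ((n : ℝ) ^ 2 / 4) : ℝ) : ℂ) * X ^ n * PbarA1 q n Λ /
    ∏ j ∈ Finset.Icc 1 n, (1 - (q : ℂ) ^ j)

/-- Theta function `θ(Λ) = ∑_{j ∈ ℤ} q^{j²/4} Λ^j`. -/
def thetaA1 (q : ℝ) (Λ : ℂ) : ℂ :=
  ∑' j : ℤ, ((q ^ ((j : ℝ) ^ 2 / 4) : ℝ) : ℂ) * Λ ^ j

/-- Rogers Laurent polynomial (symmetric Macdonald polynomial of type A₁). -/
def RogersA1 (q : ℝ) (t : ℂ) (n : ℕ) (X : ℂ) : ℂ :=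
  Msym n X + ∑ j ∈ Finset.Icc 1 (n / 2),
    (∏ i ∈ Finset.range j,
      ((1 - (q : ℂ) ^ (n - i)) * (1 - t * (q : ℂ) ^ i)) /
      ((1 - (q : ℂ) ^ (1 + i)) * (1 - t * (q : ℂ) ^ (n - i - 1)))) *
    Msym (n - 2 * j) X

/-- Global q,t-spherical function of type A₁, with `t = s²`. -/
def sphA1 (q s : ℝ) (X Λ : ℂ) : ℂ :=
  ∑' n : ℕ, (s : ℂ) ^ n * ((q ^ ((n : ℝ) ^ 2 / 4) : ℝ) : ℂ) *
    RogersA1 q ((s : ℂ) ^ 2) n X * RogersA1 q ((s : ℂ) ^ 2) n Λ *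
    ∏ i ∈ Finset.range n,
      ((1 - (s : ℂ) ^ 2 * (q : ℂ) ^ i) * (1 - (s : ℂ) ^ 2 * (q : ℂ) ^ (i + 1))) /
      ((1 - ((s : ℂ) ^ 2) ^ 2 * (q : ℂ) ^ i) * (1 - (q : ℂ) ^ (i + 1)))

/-- Macdonald truncated theta weight function of type A₁. -/
def muA1 (q : ℝ) (t : ℂ) (X : ℂ) : ℂ :=
  ∏' j : ℕ, ((1 - X ^ 2 * (q : ℂ) ^ j) * (1 - X⁻¹ ^ 2 * (q : ℂ) ^ (j + 1))) /
    ((1 - t * X ^ 2 * (q : ℂ) ^ j) * (1 - t * X⁻¹ ^ 2 * (q : ℂ) ^ (j + 1)))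

/-- absolute convergence of the global q-Whittaker series of type A₁. -/
theorem whitA1_series_abs_convergent (q : ℝ) (hq0 : 0 < q) (hq1 : q < 1)
    (X Λ : ℂ) (hΛ : Λ ≠ 0) :
    Summable (fun n : ℕ =>
      ‖((q ^ ((n : ℝ) ^ 2 / 4) : ℝ) : ℂ) * X ^ n * PbarA1 q n Λ /
        ∏ j ∈ Finset.Icc 1 n, (1 - (q : ℂ) ^ j)‖) := by
  simp only [PbarA1]
  set B : ℝ := max 1 (max ‖Λ‖ ‖Λ⁻¹‖) with hBdef
  have hB1 : (1:ℝ) ≤ B := le_max_left _ _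
  have hB0 : (0:ℝ) ≤ B := zero_le_one.trans hB1
  have hq1' : (0:ℝ) < 1 - q := by linarith
  set p : ℝ := q ^ ((1:ℝ)/4) with hp
  have hp0 : 0 < p := Real.rpow_pos_of_pos hq0 _
  have hp1 : p < 1 := Real.rpow_lt_one hq0.le hq1 (by norm_num)
  set C : ℝ := (‖X‖ + 1) * B / (1-q)^2 with hCdef
  have hC0 : 0 < C := by positivity
  -- norm of Msym
  have hMsym : ∀ r : ℕ, ‖Msym r Λ‖ ≤ 2 * B ^ r := by
    intro r
    unfold Msym
    split
    · have := one_le_pow₀ hB1 (n := r)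
      simp only [norm_one]; linarith
    · calc ‖Λ ^ r + Λ⁻¹ ^ r‖ ≤ ‖Λ ^ r‖ + ‖Λ⁻¹ ^ r‖ := norm_add_le _ _
        _ = ‖Λ‖ ^ r + ‖Λ⁻¹‖ ^ r := by rw [norm_pow, norm_pow]
        _ ≤ B ^ r + B ^ r := by
            gcongr
            · exact le_max_of_le_right (le_max_left _ _)
            · exact le_max_of_le_right (le_max_right _ _)
        _ = 2 * B ^ r := by ring
  -- norm of real cast of powers of q in ℂ
  have hqc : ∀ m : ℕ, (1 - (q : ℂ) ^ m) = ((1 - q ^ m : ℝ) : ℂ) := by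
    intro m; push_cast; ring
  have hqm0 : ∀ m : ℕ, (0:ℝ) ≤ 1 - q ^ m := fun m => by
    have := pow_le_one₀ hq0.le hq1.le (n := m); linarith
  -- coefficient bound
  have hcoef : ∀ n j : ℕ,
      ‖∏ i ∈ Finset.range j, (1 - (q : ℂ) ^ (n - i)) / (1 - (q : ℂ) ^ (i + 1))‖
        ≤ ((1-q)⁻¹) ^ j := by
    intro n j
    rw [norm_prod]
    calc ∏ i ∈ Finset.range j, ‖(1 - (q : ℂ) ^ (n - i)) / (1 - (q : ℂ) ^ (i + 1))‖
        ≤ ∏ i ∈ Finset.range j, (1-q)⁻¹ := by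
          apply Finset.prod_le_prod (fun i _ => norm_nonneg _)
          intro i _
          rw [norm_div, hqc, hqc, Complex.norm_real, Complex.norm_real,
            Real.norm_of_nonneg (hqm0 _), Real.norm_of_nonneg (hqm0 _)]
          have h1 : 1 - q ^ (n - i) ≤ 1 := by
            have : (0:ℝ) ≤ q ^ (n-i) := by positivity
            linarith
          have h2 : 1 - q ≤ 1 - q ^ (i+1) := by
            have : q ^ (i+1) ≤ q ^ 1 := pow_le_pow_of_le_one hq0.le hq1.le (by omega)
            rw [pow_one] at this; linarith
          rw [div_le_iff₀ (by linarith), inv_mul_eq_div, le_div_iff₀ hq1']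
          nlinarith [hqm0 (n-i)]
      _ = ((1-q)⁻¹) ^ j := by rw [Finset.prod_const, Finset.card_range]
  have hinv1 : (1:ℝ) ≤ (1-q)⁻¹ := by
    rw [le_inv_comm₀] <;> linarith
  -- Pbar bound
  have hPbar : ∀ n : ℕ,
      ‖Msym n Λ + ∑ j ∈ Finset.Icc 1 (n / 2),
          (∏ i ∈ Finset.range j, (1 - (q : ℂ) ^ (n - i)) / (1 - (q : ℂ) ^ (i + 1))) *
            Msym (n - 2 * j) Λ‖ ≤ (n+1) * 2 * ((1-q)⁻¹) ^ n * B ^ n := by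
    intro n
    have hterm : ∀ j ∈ Finset.Icc 1 (n/2),
        ‖(∏ i ∈ Finset.range j, (1 - (q : ℂ) ^ (n - i)) / (1 - (q : ℂ) ^ (i + 1))) *
          Msym (n - 2 * j) Λ‖ ≤ ((1-q)⁻¹) ^ n * (2 * B ^ n) := by
      intro j hj
      simp only [Finset.mem_Icc] at hj
      rw [norm_mul]
      have h1 : ‖∏ i ∈ Finset.range j, (1 - (q : ℂ) ^ (n - i)) / (1 - (q : ℂ) ^ (i + 1))‖
          ≤ ((1-q)⁻¹) ^ n := by
        refine (hcoef n j).trans (pow_le_pow_right₀ hinv1 ?_)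
        omega
      have h2 : ‖Msym (n - 2*j) Λ‖ ≤ 2 * B ^ n := by
        refine (hMsym _).trans ?_
        gcongr
        · omega
      exact mul_le_mul h1 h2 (norm_nonneg _) (by positivity)
    have hsum : ‖∑ j ∈ Finset.Icc 1 (n/2),
        (∏ i ∈ Finset.range j, (1 - (q : ℂ) ^ (n - i)) / (1 - (q : ℂ) ^ (i + 1))) *
          Msym (n - 2 * j) Λ‖ ≤ ((n/2 : ℕ) : ℝ) * (((1-q)⁻¹) ^ n * (2 * B ^ n)) := by
      refine le_trans (norm_sum_le _ _) ?_
      refine le_trans (Finset.sum_le_sum hterm) ?_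
      rw [Finset.sum_const, Nat.card_Icc, nsmul_eq_mul]
      simp
    refine le_trans (norm_add_le _ _) ?_
    have hI : (1:ℝ) ≤ ((1-q)⁻¹) ^ n := one_le_pow₀ hinv1
    have hBn : (1:ℝ) ≤ B ^ n := one_le_pow₀ hB1
    have hn2 : ((n/2 : ℕ) : ℝ) ≤ (n : ℝ) := by
      exact_mod_cast Nat.div_le_self n 2
    have hn2' : (0:ℝ) ≤ ((n/2 : ℕ) : ℝ) := Nat.cast_nonneg _
    have hIBpos : (0:ℝ) ≤ ((1-q)⁻¹)^n * B^n := by positivity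
    have k1 : B^n ≤ ((1-q)⁻¹)^n * B^n := by nlinarith
    have k2 : ((n/2:ℕ):ℝ) * (((1-q)⁻¹)^n * B^n) ≤ (n:ℝ) * (((1-q)⁻¹)^n * B^n) :=
      mul_le_mul_of_nonneg_right hn2 hIBpos
    linarith [hMsym n, hsum]
  -- bound on each term of the series
  have hbound : ∀ n : ℕ,
      ‖((q ^ ((n : ℝ) ^ 2 / 4) : ℝ) : ℂ) * X ^ n *
        (Msym n Λ + ∑ j ∈ Finset.Icc 1 (n / 2),
          (∏ i ∈ Finset.range j, (1 - (q : ℂ) ^ (n - i)) / (1 - (q : ℂ) ^ (i + 1))) *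
            Msym (n - 2 * j) Λ) /
        ∏ j ∈ Finset.Icc 1 n, (1 - (q : ℂ) ^ j)‖ ≤ 2*((n:ℝ)+1) * p^(n^2) * C^n := by
    intro n
    have hqp : q ^ ((n:ℝ)^2/4) = p ^ (n^2) := by
      rw [hp, ← Real.rpow_natCast (q ^ ((1:ℝ)/4)) (n^2), ← Real.rpow_mul hq0.le]
      congr 1; push_cast; ring
    have hD : (1-q)^n ≤ ‖∏ j ∈ Finset.Icc 1 n, (1 - (q:ℂ)^j)‖ := by
      rw [norm_prod]
      calc (1-q)^n = ∏ _j ∈ Finset.Icc 1 n, (1-q) := by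
            rw [Finset.prod_const, Nat.card_Icc]; simp
        _ ≤ ∏ j ∈ Finset.Icc 1 n, ‖1 - (q:ℂ)^j‖ := by
            apply Finset.prod_le_prod (fun _ _ => hq1'.le)
            intro j hj
            rw [hqc, Complex.norm_real, Real.norm_of_nonneg (hqm0 _)]
            simp only [Finset.mem_Icc] at hj
            have h : q ^ j ≤ q ^ 1 := pow_le_pow_of_le_one hq0.le hq1.le hj.1
            rw [pow_one] at h; linarith
    rw [norm_div, norm_mul, norm_mul, Complex.norm_real, norm_pow,
      Real.norm_of_nonneg (Real.rpow_nonneg hq0.le _), hqp]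
    calc p^(n^2) * ‖X‖^n *
          ‖Msym n Λ + ∑ j ∈ Finset.Icc 1 (n / 2),
            (∏ i ∈ Finset.range j, (1 - (q : ℂ) ^ (n - i)) / (1 - (q : ℂ) ^ (i + 1))) *
              Msym (n - 2 * j) Λ‖ / ‖∏ j ∈ Finset.Icc 1 n, (1 - (q:ℂ)^j)‖
        ≤ p^(n^2) * ‖X‖^n * (((n:ℝ)+1) * 2 * ((1-q)⁻¹)^n * B^n) / (1-q)^n := by
          have hPn := hPbar n
          have hnum : p^(n^2) * ‖X‖^n *
              ‖Msym n Λ + ∑ j ∈ Finset.Icc 1 (n / 2),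
                (∏ i ∈ Finset.range j, (1 - (q : ℂ) ^ (n - i)) / (1 - (q : ℂ) ^ (i + 1))) *
                  Msym (n - 2 * j) Λ‖ ≤ p^(n^2) * ‖X‖^n * (((n:ℝ)+1) * 2 * ((1-q)⁻¹)^n * B^n) := by
            gcongr
          exact div_le_div₀ (by positivity) hnum (by positivity) hD
      _ = 2*((n:ℝ)+1) * p^(n^2) * (‖X‖*B/(1-q)^2)^n := by
          have hu : (1-q)^n ≠ 0 := by positivity
          rw [div_pow, mul_pow, inv_pow, ← pow_mul, mul_comm 2 n, pow_mul]
          field_simp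
      _ ≤ 2*((n:ℝ)+1) * p^(n^2) * C^n := by
          have hXC : ‖X‖*B/(1-q)^2 ≤ C := by
            rw [hCdef]
            gcongr
            linarith
          have := pow_le_pow_left₀ (by positivity : (0:ℝ) ≤ ‖X‖*B/(1-q)^2) hXC n
          have h0 : (0:ℝ) ≤ 2*((n:ℝ)+1) * p^(n^2) := by positivity
          exact mul_le_mul_of_nonneg_left this h0
  -- summability of the dominating series
  have hsum2 : Summable (fun n : ℕ => 2*((n:ℝ)+1) * p^(n^2) * C^n) := by
    have h0 : Tendsto (fun n : ℕ => p ^ (2*n+1) * C) atTop (nhds (0*C)) := by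
      apply Tendsto.mul_const
      have hg : Tendsto (fun n : ℕ => 2*n+1) atTop atTop := by
        apply tendsto_atTop_mono (f := fun n : ℕ => n) (fun n => by show n ≤ 2*n+1; omega)
        exact tendsto_id
      exact (tendsto_pow_atTop_nhds_zero_of_lt_one hp0.le hp1).comp hg
    rw [zero_mul] at h0
    have hev : ∀ᶠ n in atTop, p ^ (2*n+1) * C < 1/4 :=
      h0.eventually_lt_const (by norm_num)
    apply summable_of_ratio_norm_eventually_le (r := 1/2) (by norm_num)
    filter_upwards [hev] with n hn
    rw [Real.norm_of_nonneg (by positivity), Real.norm_of_nonneg (by positivity)]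
    have hpow : p ^ ((n+1)^2) = p^(n^2) * p^(2*n+1) := by
      rw [← pow_add]; congr 1; ring
    push_cast
    rw [hpow, pow_succ C n]
    have hPCn : (0:ℝ) ≤ p^(n^2) * C^n := by positivity
    calc 2*((n:ℝ)+1+1) * (p^(n^2) * p^(2*n+1)) * (C^n * C)
        = (2*((n:ℝ)+2)) * (p^(n^2)*C^n) * (p^(2*n+1)*C) := by ring
      _ ≤ (2*((n:ℝ)+2)) * (p^(n^2)*C^n) * (1/4) := by
          apply mul_le_mul_of_nonneg_left hn.le
          positivity
      _ ≤ 1/2 * (2*((n:ℝ)+1) * p^(n^2) * C^n) := by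
          nlinarith [mul_nonneg (Nat.cast_nonneg (α := ℝ) n) hPCn, hPCn]
  exact hsum2.of_nonneg_of_le (fun n => norm_nonneg _) hbound

end
end

section
/- Fix a real number q with 0 < q < 1. For all X, Λ ∈ ℂ with X ≠ 0 and Λ ≠ 0, the global q-Whittaker function Ψ̃ of type A₁ satisfies the q-Toda difference equation q^{1/4} · ( X · Ψ̃(q^{1/2}X, Λ) + X^{−1} · ( Ψ̃(q^{−1/2}X, Λ) − Ψ̃(q^{1/2}X, Λ) ) ) = (Λ + Λ^{−1}) · Ψ̃(X, Λ). (Equation (4.29) of the paper, Theorem 3.2(ii) in the rank-one case.) -/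
open scoped BigOperators
open Filter

noncomputable section

namespace QTodaAux

def Np (q : ℝ) (n j : ℕ) : ℂ := ∏ i ∈ Finset.range j, (1 - (q : ℂ) ^ (n - i))
def Dp (q : ℝ) (j : ℕ) : ℂ := ∏ i ∈ Finset.range j, (1 - (q : ℂ) ^ (i + 1))
def cc (q : ℝ) (n j : ℕ) : ℂ := ∏ i ∈ Finset.range j, (1 - (q : ℂ) ^ (n - i)) / (1 - (q : ℂ) ^ (i + 1))

lemma cc_eq (q : ℝ) (n j : ℕ) : cc q n j = Np q n j / Dp q j := by
  simp [cc, Np, Dp, Finset.prod_div_distrib]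

lemma one_sub_pow_ne {q : ℝ} (hq0 : 0 < q) (hq1 : q < 1) (k : ℕ) (hk : 1 ≤ k) :
    (1 : ℂ) - (q : ℂ) ^ k ≠ 0 := by
  have h1 : ((1 - q ^ k : ℝ) : ℂ) = 1 - (q:ℂ)^k := by push_cast; ring
  rw [← h1]
  rw [Complex.ofReal_ne_zero]
  have : q ^ k < 1 := pow_lt_one₀ hq0.le hq1 (by omega)
  linarith

lemma Dp_ne {q : ℝ} (hq0 : 0 < q) (hq1 : q < 1) (j : ℕ) : Dp q j ≠ 0 :=
  Finset.prod_ne_zero_iff.2 fun i _ => one_sub_pow_ne hq0 hq1 (i+1) (by omega)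

lemma Dp_succ (q : ℝ) (j : ℕ) : Dp q (j+1) = Dp q j * (1 - (q:ℂ)^(j+1)) := Finset.prod_range_succ _ _

lemma Np_succ (q : ℝ) (n j : ℕ) : Np q n (j+1) = Np q n j * (1 - (q:ℂ)^(n-j)) := Finset.prod_range_succ _ _

lemma Np_shift (q : ℝ) (n j : ℕ) : Np q (n+1) (j+1) = Np q n j * (1 - (q:ℂ)^(n+1)) := by
  rw [Np, Finset.prod_range_succ']
  congr 1
  · apply Finset.prod_congr rfl; intro i _; rw [Nat.succ_sub_succ]

lemma Np_zero_of_lt (q : ℝ) (n j : ℕ) (h : n < j) : Np q n j = 0 := by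
  apply Finset.prod_eq_zero (Finset.mem_range.2 h)
  simp

lemma cc_zero_of_lt (q : ℝ) (n j : ℕ) (h : n < j) : cc q n j = 0 := by
  rw [cc_eq, Np_zero_of_lt _ _ _ h, zero_div]

lemma Np_diag (q : ℝ) (n : ℕ) : Np q n n = Dp q n := by
  rw [Np, Dp, ← Finset.prod_range_reflect]
  apply Finset.prod_congr rfl
  intro i hi
  rw [Finset.mem_range] at hi
  congr 2
  omega

lemma cc_diag {q : ℝ} (hq0 : 0 < q) (hq1 : q < 1) (n : ℕ) : cc q n n = 1 := by
  rw [cc_eq, Np_diag, div_self (Dp_ne hq0 hq1 n)]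

lemma cc_zero' (q : ℝ) (n : ℕ) : cc q n 0 = 1 := by simp [cc]

lemma key_identity {q : ℝ} (hq0 : 0 < q) (hq1 : q < 1) (n j : ℕ) :
    cc q (n+2) (j+1) = cc q (n+1) (j+1) + cc q (n+1) j - (1 - (q:ℂ)^(n+1)) * cc q n j := by
  rcases le_or_gt j n with hj | hj
  · have hDj : Dp q j ≠ 0 := Dp_ne hq0 hq1 _
    have hb : (1:ℂ) - (q : ℂ) ^ (j+1) ≠ 0 := one_sub_pow_ne hq0 hq1 _ (by omega)
    have e1 : Np q (n+2) (j+1) = Np q (n+1) j * (1 - (q:ℂ)^(n+2)) := Np_shift q (n+1) j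
    have e2 : Np q (n+1) (j+1) = Np q (n+1) j * (1 - (q:ℂ)^(n+1-j)) := Np_succ q (n+1) j
    have e3 : Np q n j * (1 - (q:ℂ)^(n+1)) = Np q (n+1) j * (1 - (q:ℂ)^(n+1-j)) := by
      rw [← Np_shift, ← e2]
    have hpow : (q:ℂ)^(n+1-j) * (q:ℂ)^(j+1) = (q:ℂ)^(n+2) := by
      rw [← pow_add]; congr 1; omega
    have NI : Np q (n+2) (j+1) = Np q (n+1) (j+1) + (1 - (q:ℂ)^(j+1)) * Np q (n+1) j
        - (1 - (q:ℂ)^(j+1)) * ((1 - (q:ℂ)^(n+1)) * Np q n j) := by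
      rw [e1, e2]
      linear_combination (Np q (n+1) j) * hpow + ((1:ℂ) - (q:ℂ)^(j+1)) * e3
    rw [cc_eq, cc_eq, cc_eq, cc_eq, NI, sub_div, add_div, Dp_succ]
    have h1 : (1 - (q:ℂ)^(j+1)) * Np q (n+1) j / (Dp q j * (1 - (q:ℂ)^(j+1)))
        = Np q (n+1) j / Dp q j := by
      rw [mul_comm (Dp q j), mul_div_mul_left _ _ hb]
    have h2 : (1 - (q:ℂ)^(j+1)) * ((1 - (q:ℂ)^(n+1)) * Np q n j) / (Dp q j * (1 - (q:ℂ)^(j+1)))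
        = (1 - (q:ℂ)^(n+1)) * (Np q n j / Dp q j) := by
      rw [mul_comm (Dp q j), mul_div_mul_left _ _ hb, mul_div_assoc]
    rw [h1, h2]
  · rcases Nat.lt_or_ge n (j-1) with hj2 | hj2
    · rw [cc_zero_of_lt _ _ _ (by omega), cc_zero_of_lt _ _ _ (by omega),
        cc_zero_of_lt _ _ _ (by omega), cc_zero_of_lt _ _ _ (by omega)]
      ring
    · have hjn : j = n + 1 := by omega
      subst hjn
      rw [cc_diag hq0 hq1, cc_zero_of_lt _ _ _ (by omega), cc_diag hq0 hq1,
        cc_zero_of_lt _ _ _ (by omega)]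
      ring


def TT (Λ : ℂ) (m j : ℕ) : ℂ := Λ ^ (m - j) * (Λ⁻¹) ^ j

def G (q : ℝ) (Λ : ℂ) (m : ℕ) : ℂ := ∑ j ∈ Finset.range (m+1), cc q m j * TT Λ m j

lemma Grec {q : ℝ} {Λ : ℂ} (hq0 : 0 < q) (hq1 : q < 1) (hΛ : Λ ≠ 0) (n : ℕ) :
    (Λ + Λ⁻¹) * G q Λ (n+1) = G q Λ (n+2) + (1 - (q:ℂ)^(n+1)) * G q Λ n := by
  have hinv : Λ * Λ⁻¹ = 1 := mul_inv_cancel₀ hΛ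
  have hT1 : ∀ j ∈ Finset.range (n+2), Λ * TT Λ (n+1) j = TT Λ (n+2) j := by
    intro j hj
    rw [Finset.mem_range] at hj
    rw [TT, TT, show n+2-j = (n+1-j)+1 by omega, pow_succ]
    ring
  have hT2 : ∀ j : ℕ, Λ⁻¹ * TT Λ (n+1) j = TT Λ (n+2) (j+1) := by
    intro j
    rw [TT, TT, show n+2-(j+1) = n+1-j by omega, pow_succ]
    ring
  have hT3 : ∀ j ∈ Finset.range (n+1), TT Λ n j = TT Λ (n+2) (j+1) := by
    intro j hj
    rw [Finset.mem_range] at hj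
    rw [TT, TT, show n+2-(j+1) = (n-j)+1 by omega, pow_succ, pow_succ]
    calc Λ ^ (n-j) * Λ⁻¹ ^ j = Λ ^ (n-j) * Λ⁻¹ ^ j * (Λ * Λ⁻¹) := by rw [hinv, mul_one]
      _ = Λ ^ (n - j) * Λ * (Λ⁻¹ ^ j * Λ⁻¹) := by ring
  have L : (Λ + Λ⁻¹) * G q Λ (n+1) = ∑ j ∈ Finset.range (n+2),
      (cc q (n+1) j * TT Λ (n+2) j + cc q (n+1) j * TT Λ (n+2) (j+1)) := by
    rw [G, Finset.mul_sum]
    apply Finset.sum_congr rfl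
    intro j hj
    rw [← hT1 j hj, ← hT2 j]
    ring
  have R1 : G q Λ (n+2) = (∑ j ∈ Finset.range (n+2), cc q (n+2) (j+1) * TT Λ (n+2) (j+1))
      + TT Λ (n+2) 0 := by
    rw [G, Finset.sum_range_succ', cc_zero', one_mul]
  have R2 : (1 - (q:ℂ)^(n+1)) * G q Λ n = ∑ j ∈ Finset.range (n+2),
      (1 - (q:ℂ)^(n+1)) * cc q n j * TT Λ (n+2) (j+1) := by
    symm
    rw [Finset.sum_range_succ, cc_zero_of_lt q n (n+1) (by omega)]
    rw [G, Finset.mul_sum]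
    simp only [mul_zero, zero_mul, add_zero]
    apply Finset.sum_congr rfl
    intro j hj
    rw [← hT3 j hj]
    ring
  have R3 : (∑ j ∈ Finset.range (n+2), (cc q (n+1) (j+1) * TT Λ (n+2) (j+1)
        + cc q (n+1) j * TT Λ (n+2) (j+1)))
      = (∑ j ∈ Finset.range (n+2), cc q (n+2) (j+1) * TT Λ (n+2) (j+1))
        + ∑ j ∈ Finset.range (n+2), (1 - (q:ℂ)^(n+1)) * cc q n j * TT Λ (n+2) (j+1) := by
    rw [← Finset.sum_add_distrib]
    apply Finset.sum_congr rfl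
    intro j _
    rw [key_identity hq0 hq1 n j]
    ring
  have R4 : (∑ j ∈ Finset.range (n+2), cc q (n+1) (j+1) * TT Λ (n+2) (j+1)) + TT Λ (n+2) 0
      = ∑ j ∈ Finset.range (n+2), cc q (n+1) j * TT Λ (n+2) j := by
    have h1 := Finset.sum_range_succ' (fun j => cc q (n+1) j * TT Λ (n+2) j) (n+2)
    have h2 := Finset.sum_range_succ (fun j => cc q (n+1) j * TT Λ (n+2) j) (n+2)
    rw [cc_zero_of_lt q (n+1) (n+2) (by omega), zero_mul, add_zero] at h2
    simp only [cc_zero', one_mul] at h1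
    rw [← h1, h2]
  calc (Λ + Λ⁻¹) * G q Λ (n+1)
      = ∑ j ∈ Finset.range (n+2),
        (cc q (n+1) j * TT Λ (n+2) j + cc q (n+1) j * TT Λ (n+2) (j+1)) := L
    _ = (∑ j ∈ Finset.range (n+2), cc q (n+1) j * TT Λ (n+2) j)
        + ∑ j ∈ Finset.range (n+2), cc q (n+1) j * TT Λ (n+2) (j+1) := Finset.sum_add_distrib
    _ = ((∑ j ∈ Finset.range (n+2), cc q (n+1) (j+1) * TT Λ (n+2) (j+1)) + TT Λ (n+2) 0)
        + ∑ j ∈ Finset.range (n+2), cc q (n+1) j * TT Λ (n+2) (j+1) := by rw [R4]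
    _ = (∑ j ∈ Finset.range (n+2), (cc q (n+1) (j+1) * TT Λ (n+2) (j+1)
        + cc q (n+1) j * TT Λ (n+2) (j+1))) + TT Λ (n+2) 0 := by
          rw [Finset.sum_add_distrib]; ring
    _ = ((∑ j ∈ Finset.range (n+2), cc q (n+2) (j+1) * TT Λ (n+2) (j+1))
        + ∑ j ∈ Finset.range (n+2), (1 - (q:ℂ)^(n+1)) * cc q n j * TT Λ (n+2) (j+1))
        + TT Λ (n+2) 0 := by rw [R3]
    _ = G q Λ (n+2) + (1 - (q:ℂ)^(n+1)) * G q Λ n := by rw [R1, R2]; ring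

lemma ND (q : ℝ) : ∀ j n : ℕ, j ≤ n → Np q n j * Dp q (n - j) = Dp q n := by
  intro j
  induction j with
  | zero => intro n _; simp [Np]
  | succ j ih =>
    intro n h
    have h1 : n - j = (n - (j+1)) + 1 := by omega
    have h2 := ih n (by omega)
    rw [h1, Dp_succ] at h2
    rw [Np_succ, ← h2, h1]
    ring

lemma cc_symm {q : ℝ} (hq0 : 0 < q) (hq1 : q < 1) {n j : ℕ} (h : j ≤ n) :
    cc q n j = cc q n (n - j) := by
  have h1 := ND q j n h
  have h2 := ND q (n-j) n (by omega)
  rw [show n - (n - j) = j from by omega] at h2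
  rw [cc_eq, cc_eq, div_eq_div_iff (Dp_ne hq0 hq1 j) (Dp_ne hq0 hq1 (n-j)), h1, ← h2]

lemma pbar_sum (q : ℝ) (n : ℕ) (Λ : ℂ) :
    PbarA1 q n Λ = ∑ j ∈ Finset.range (n/2 + 1), cc q n j * Msym (n - 2*j) Λ := by
  rw [PbarA1]
  have hset : Finset.range (n/2 + 1) = insert 0 (Finset.Icc 1 (n/2)) := by
    ext x
    simp only [Finset.mem_range, Finset.mem_insert, Finset.mem_Icc]
    omega
  rw [hset, Finset.sum_insert (by simp)]
  rw [cc_zero', one_mul, Nat.mul_zero, Nat.sub_zero]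
  rfl

lemma TT_pair {Λ : ℂ} (hΛ : Λ ≠ 0) {n j : ℕ} (h : 2*j < n) :
    TT Λ n j + TT Λ n (n - j) = Msym (n - 2*j) Λ := by
  have hu : Λ ^ j * Λ⁻¹ ^ j = 1 := by rw [← mul_pow, mul_inv_cancel₀ hΛ, one_pow]
  rw [TT, TT, Msym, if_neg (by omega), show n - (n - j) = j from by omega,
    show n - j = (n - 2*j) + j from by omega, pow_add, pow_add]
  linear_combination (Λ ^ (n - 2*j) + Λ⁻¹ ^ (n - 2*j)) * hu

lemma pbar_eq_G {q : ℝ} {Λ : ℂ} (hq0 : 0 < q) (hq1 : q < 1) (hΛ : Λ ≠ 0) (n : ℕ) :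
    PbarA1 q n Λ = G q Λ n := by
  obtain ⟨m, hm⟩ : ∃ m, n / 2 = m := ⟨n/2, rfl⟩
  rw [pbar_sum, G, hm]
  have hsplit : ∑ j ∈ Finset.range (n+1), cc q n j * TT Λ n j
      = (∑ j ∈ Finset.range (m+1), cc q n j * TT Λ n j)
        + ∑ j ∈ Finset.Ico (m+1) (n+1), cc q n j * TT Λ n j := by
    rw [Finset.range_eq_Ico, ← Finset.sum_Ico_consecutive _ (by omega : 0 ≤ m+1) (by omega : m+1 ≤ n+1),
      ← Finset.range_eq_Ico]
  have hre : ∑ j ∈ Finset.Ico (m+1) (n+1), cc q n j * TT Λ n j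
      = ∑ k ∈ Finset.range (n - m), cc q n k * TT Λ n (n - k) := by
    rw [Finset.range_eq_Ico]
    refine Finset.sum_nbij' (fun j => n - j) (fun k => n - k) ?_ ?_ ?_ ?_ ?_
    · intro a ha
      rw [Finset.mem_Ico] at ha
      show n - a ∈ Finset.Ico 0 (n - m)
      rw [Finset.mem_Ico]
      omega
    · intro a ha
      rw [Finset.mem_Ico] at ha
      show n - a ∈ Finset.Ico (m+1) (n+1)
      rw [Finset.mem_Ico]
      omega
    · intro a ha
      rw [Finset.mem_Ico] at ha
      show n - (n - a) = a
      omega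
    · intro a ha
      rw [Finset.mem_Ico] at ha
      show n - (n - a) = a
      omega
    · intro a ha
      rw [Finset.mem_Ico] at ha
      show cc q n a * TT Λ n a = cc q n (n - a) * TT Λ n (n - (n - a))
      rw [show n - (n - a) = a from by omega, ← cc_symm hq0 hq1 (by omega : a ≤ n)]
  rw [hsplit, hre]
  have h2 : n = 2*m ∨ n = 2*m + 1 := by omega
  rcases h2 with h2 | h2
  · subst h2
    have hnm : 2*m - m = m := by omega
    rw [hnm]
    rw [Finset.sum_range_succ, Finset.sum_range_succ]
    have hTm : TT Λ (2*m) m = 1 := by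
      rw [TT, show 2*m - m = m from by omega, ← mul_pow, mul_inv_cancel₀ hΛ, one_pow]
    have hMm : Msym (2*m - 2*m) Λ = 1 := by rw [show 2*m - 2*m = 0 from by omega, Msym]; simp
    rw [hTm, hMm]
    rw [add_right_comm, ← Finset.sum_add_distrib]
    congr 1
    · apply Finset.sum_congr rfl
      intro j hj
      rw [Finset.mem_range] at hj
      rw [← TT_pair hΛ (by omega : 2*j < 2*m)]
      ring
  · subst h2
    have hnm : 2*m + 1 - m = m + 1 := by omega
    rw [hnm, ← Finset.sum_add_distrib]
    apply Finset.sum_congr rfl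
    intro j hj
    rw [Finset.mem_range] at hj
    rw [← TT_pair hΛ (by omega : 2*j < 2*m+1)]
    ring

lemma pbar_rec {q : ℝ} {Λ : ℂ} (hq0 : 0 < q) (hq1 : q < 1) (hΛ : Λ ≠ 0) (n : ℕ) :
    (Λ + Λ⁻¹) * PbarA1 q (n+1) Λ = PbarA1 q (n+2) Λ + (1 - (q:ℂ)^(n+1)) * PbarA1 q n Λ := by
  rw [pbar_eq_G hq0 hq1 hΛ, pbar_eq_G hq0 hq1 hΛ, pbar_eq_G hq0 hq1 hΛ, Grec hq0 hq1 hΛ]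

lemma pbar_zeroth (q : ℝ) (Λ : ℂ) : PbarA1 q 0 Λ = 1 := by simp [PbarA1, Msym]

lemma pbar_oneth (q : ℝ) (Λ : ℂ) : PbarA1 q 1 Λ = Λ + Λ⁻¹ := by
  simp [PbarA1, Msym]

/-- the summand of the Whittaker function -/
def wterm (q : ℝ) (X Λ : ℂ) (n : ℕ) : ℂ :=
  ((q ^ ((n : ℝ) ^ 2 / 4) : ℝ) : ℂ) * X ^ n * PbarA1 q n Λ /
    ∏ j ∈ Finset.Icc 1 n, (1 - (q : ℂ) ^ j)

lemma whit_eq (q : ℝ) (X Λ : ℂ) : whitA1 q X Λ = ∑' n, wterm q X Λ n := rfl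

lemma prod_Icc_eq_Dp (q : ℝ) (n : ℕ) :
    ∏ j ∈ Finset.Icc 1 n, (1 - (q : ℂ) ^ j) = Dp q n := by
  induction n with
  | zero => simp [Dp]
  | succ n ih => rw [Finset.prod_Icc_succ_top (by omega), ih, Dp_succ, mul_comm, Dp]

lemma wterm_eq (q : ℝ) (X Λ : ℂ) (n : ℕ) :
    wterm q X Λ n = ((q ^ ((n : ℝ) ^ 2 / 4) : ℝ) : ℂ) * X ^ n * PbarA1 q n Λ / Dp q n := by
  rw [wterm, prod_Icc_eq_Dp]

lemma wterm_scale (q a : ℝ) (X Λ : ℂ) (n : ℕ) :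
    wterm q ((a : ℂ) * X) Λ n = ((a ^ n : ℝ) : ℂ) * wterm q X Λ n := by
  rw [wterm, wterm, mul_pow]
  push_cast
  ring

/-- the majorant constant -/
def KC (q : ℝ) (X Λ : ℂ) : ℝ :=
  max 1 (‖X‖ * (max 1 (max ‖Λ‖ ‖Λ⁻¹‖)) * 2 / ((1-q) * (1-q)))

lemma norm_one_sub_cpow_le {q : ℝ} (hq0 : 0 < q) (hq1 : q < 1) (k : ℕ) :
    ‖(1:ℂ) - (q:ℂ)^k‖ ≤ 2 := by
  have h2 : ‖(q:ℂ)^k‖ ≤ 1 := by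
    rw [norm_pow, Complex.norm_real, Real.norm_eq_abs, abs_of_pos hq0]
    exact pow_le_one₀ hq0.le hq1.le
  calc ‖(1:ℂ) - (q:ℂ)^k‖ ≤ ‖(1:ℂ)‖ + ‖(q:ℂ)^k‖ := norm_sub_le _ _
    _ ≤ 1 + 1 := by rw [norm_one]; linarith
    _ = 2 := by norm_num

lemma norm_one_sub_cpow_ge {q : ℝ} (hq0 : 0 < q) (hq1 : q < 1) (k : ℕ) (hk : 1 ≤ k) :
    1 - q ≤ ‖(1:ℂ) - (q:ℂ)^k‖ := by
  have h1 : (1:ℂ) - (q:ℂ)^k = ((1 - q^k : ℝ) : ℂ) := by push_cast; ring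
  rw [h1, Complex.norm_real, Real.norm_eq_abs]
  have h2 : q ^ k ≤ q := by
    calc q ^ k ≤ q ^ 1 := pow_le_pow_of_le_one hq0.le hq1.le hk
      _ = q := pow_one q
  have h3 : 0 < 1 - q ^ k := by
    have : q ^ k < 1 := pow_lt_one₀ hq0.le hq1 (by omega)
    linarith
  rw [abs_of_pos h3]
  linarith

lemma norm_Dp_ge {q : ℝ} (hq0 : 0 < q) (hq1 : q < 1) (n : ℕ) :
    (1-q)^n ≤ ‖Dp q n‖ := by
  rw [Dp, norm_prod]
  calc (1-q)^n = ∏ _i ∈ Finset.range n, (1-q) := by rw [Finset.prod_const, Finset.card_range]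
    _ ≤ ∏ i ∈ Finset.range n, ‖(1:ℂ) - (q:ℂ)^(i+1)‖ := by
        apply Finset.prod_le_prod
        · intro i _; linarith
        · intro i _; exact norm_one_sub_cpow_ge hq0 hq1 (i+1) (by omega)

lemma norm_cc_le {q : ℝ} (hq0 : 0 < q) (hq1 : q < 1) {n j : ℕ} (h : j ≤ n) :
    ‖cc q n j‖ ≤ (2/(1-q))^n := by
  have hb : (1:ℝ) ≤ 2/(1-q) := by
    rw [le_div_iff₀ (by linarith)]
    linarith
  rw [cc, norm_prod]
  calc ∏ i ∈ Finset.range j, ‖(1 - (q:ℂ)^(n-i)) / (1 - (q:ℂ)^(i+1))‖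
      ≤ ∏ _i ∈ Finset.range j, (2/(1-q)) := by
        apply Finset.prod_le_prod
        · intro i _; positivity
        · intro i _
          rw [norm_div]
          apply div_le_div₀ (by linarith) (norm_one_sub_cpow_le hq0 hq1 _) (by linarith)
          exact norm_one_sub_cpow_ge hq0 hq1 (i+1) (by omega)
    _ = (2/(1-q))^j := by rw [Finset.prod_const, Finset.card_range]
    _ ≤ (2/(1-q))^n := pow_le_pow_right₀ hb h

lemma norm_pbar_le {q : ℝ} (hq0 : 0 < q) (hq1 : q < 1) (Λ : ℂ) (n : ℕ) :
    ‖PbarA1 q n Λ‖ ≤ (n+1) * ((2/(1-q))^n * (2 * (max 1 (max ‖Λ‖ ‖Λ⁻¹‖))^n)) := by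
  have hq' : (0:ℝ) < 1 - q := by linarith
  set R := max 1 (max ‖Λ‖ ‖Λ⁻¹‖) with hR
  have hR1 : (1:ℝ) ≤ R := le_max_left _ _
  have hM : ∀ r : ℕ, r ≤ n → ‖Msym r Λ‖ ≤ 2 * R^n := by
    intro r hr
    have hRn : (1:ℝ) ≤ R^n := one_le_pow₀ hR1
    rw [Msym]
    split_ifs
    · simp only [norm_one]; linarith
    · calc ‖Λ^r + Λ⁻¹^r‖ ≤ ‖Λ^r‖ + ‖Λ⁻¹^r‖ := norm_add_le _ _
        _ = ‖Λ‖^r + ‖Λ⁻¹‖^r := by rw [norm_pow, norm_pow]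
        _ ≤ R^r + R^r := by
            gcongr
            · exact le_trans (le_max_left _ _) (le_max_right _ _)
            · exact le_trans (le_max_right _ _) (le_max_right _ _)
        _ = 2 * R^r := by ring
        _ ≤ 2 * R^n := by gcongr
  rw [pbar_sum]
  calc ‖∑ j ∈ Finset.range (n/2+1), cc q n j * Msym (n - 2*j) Λ‖
      ≤ ∑ j ∈ Finset.range (n/2+1), ‖cc q n j * Msym (n - 2*j) Λ‖ := norm_sum_le _ _
    _ ≤ ∑ _j ∈ Finset.range (n/2+1), (2/(1-q))^n * (2 * R^n) := by
        apply Finset.sum_le_sum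
        intro j hj
        rw [Finset.mem_range] at hj
        rw [norm_mul]
        apply mul_le_mul (norm_cc_le hq0 hq1 (by omega)) (hM _ (by omega)) (norm_nonneg _)
        positivity
    _ = (((n/2 : ℕ) : ℝ)+1) * ((2/(1-q))^n * (2 * R^n)) := by
        rw [Finset.sum_const, Finset.card_range, nsmul_eq_mul]
        push_cast
        ring
    _ ≤ (n+1) * ((2/(1-q))^n * (2 * R^n)) := by
        gcongr
        exact Nat.div_le_self n 2

lemma aux_alg (a x r u : ℝ) (n : ℕ) (hu : u ≠ 0) :
    a*x^n*(((n:ℝ)+1)*((2/u)^n*(2*r^n)))/u^n = 2*((n:ℝ)+1)*((x*r*2/(u*u))^n)*a := by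
  simp only [div_pow, mul_pow]
  field_simp

lemma norm_wterm_le {q : ℝ} (hq0 : 0 < q) (hq1 : q < 1) (X Λ : ℂ) (n : ℕ) :
    ‖wterm q X Λ n‖ ≤ 2 * (n+1) * (KC q X Λ)^n * q ^ ((n : ℝ)^2/4) := by
  set R := max 1 (max ‖Λ‖ ‖Λ⁻¹‖) with hR
  have hq' : (0:ℝ) < 1 - q := by linarith
  have hR1 : (1:ℝ) ≤ R := le_max_left _ _
  have hR0 : (0:ℝ) < R := by linarith
  have hrp : (0:ℝ) < q ^ ((n : ℝ)^2/4) := Real.rpow_pos_of_pos hq0 _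
  have hDp : (1-q)^n ≤ ‖Dp q n‖ := norm_Dp_ge hq0 hq1 n
  have hDp0 : (0:ℝ) < (1-q)^n := by positivity
  rw [wterm_eq, norm_div, norm_mul, norm_mul, Complex.norm_real, norm_pow,
    Real.norm_eq_abs, abs_of_pos hrp]
  calc q ^ ((n : ℝ)^2/4) * ‖X‖^n * ‖PbarA1 q n Λ‖ / ‖Dp q n‖
      ≤ q ^ ((n : ℝ)^2/4) * ‖X‖^n * ((n+1) * ((2/(1-q))^n * (2 * R^n))) / (1-q)^n := by
        apply div_le_div₀ (by positivity) _ hDp0 hDp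
        gcongr
        exact norm_pbar_le hq0 hq1 Λ n
    _ = 2 * (n+1) * ((‖X‖ * R * 2 / ((1-q)*(1-q)))^n) * q ^ ((n : ℝ)^2/4) := by
        exact aux_alg _ _ _ _ n (by linarith)
    _ ≤ 2 * (n+1) * (KC q X Λ)^n * q ^ ((n : ℝ)^2/4) := by
        gcongr
        exact le_max_right _ _

lemma summable_majorant {q : ℝ} (hq0 : 0 < q) (hq1 : q < 1) {K : ℝ} (hK : 1 ≤ K) :
    Summable (fun n : ℕ => 2 * ((n : ℝ)+1) * K^n * q ^ ((n : ℝ)^2/4)) := by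
  have hK0 : (0:ℝ) < K := by linarith
  have hqh : q ^ ((1:ℝ)/2) < 1 := Real.rpow_lt_one hq0.le hq1 (by norm_num)
  have hqh0 : 0 < q ^ ((1:ℝ)/2) := Real.rpow_pos_of_pos hq0 _
  -- eventually (q^(1/2))^n ≤ 1/(4K)
  have htend : Filter.Tendsto (fun n : ℕ => (q ^ ((1:ℝ)/2))^n) atTop (nhds 0) :=
    tendsto_pow_atTop_nhds_zero_of_lt_one hqh0.le hqh
  have hev : ∀ᶠ n : ℕ in atTop, (q ^ ((1:ℝ)/2))^n ≤ 1/(4*K) :=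
    htend.eventually_le_const (show (0:ℝ) < 1/(4*K) by positivity)
  apply summable_of_ratio_norm_eventually_le (r := 1/2) (by norm_num)
  filter_upwards [hev] with n hn
  push_cast
  have hq14 : q ^ (((n:ℝ)+1)^2/4) = q ^ ((n:ℝ)^2/4) * (q ^ ((1:ℝ)/2))^(n:ℕ) * q ^ ((1:ℝ)/4) := by
    rw [← Real.rpow_natCast (q ^ ((1:ℝ)/2)) n, ← Real.rpow_mul hq0.le, ← Real.rpow_add hq0,
      ← Real.rpow_add hq0]
    congr 1
    ring
  have hb : 2 * ((n:ℝ)+1+1) * K^(n+1) * q ^ (((n:ℝ)+1)^2/4)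
      ≤ 1/2 * (2 * ((n:ℝ)+1) * K^n * q ^ ((n:ℝ)^2/4)) := by
    rw [hq14, pow_succ]
    have h14 : q ^ ((1:ℝ)/4) ≤ 1 :=
      (Real.rpow_le_one hq0.le hq1.le (by norm_num))
    have hrn : (0:ℝ) < q ^ ((n:ℝ)^2/4) := Real.rpow_pos_of_pos hq0 _
    have key : K * (q ^ ((1:ℝ)/2))^(n:ℕ) ≤ 1/4 := by
      calc K * (q ^ ((1:ℝ)/2))^(n:ℕ) ≤ K * (1/(4*K)) := by
            exact mul_le_mul_of_nonneg_left hn hK0.le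
        _ = 1/4 := by field_simp
    calc 2 * ((n:ℝ)+1+1) * (K^n * K) * (q ^ ((n:ℝ)^2/4) * (q ^ ((1:ℝ)/2))^(n:ℕ) * q ^ ((1:ℝ)/4))
        = (2 * ((n:ℝ)+1+1)) * (K^n * q ^ ((n:ℝ)^2/4)) * ((K * (q ^ ((1:ℝ)/2))^(n:ℕ)) * q ^ ((1:ℝ)/4)) := by
          ring
      _ ≤ (2 * (2*((n:ℝ)+1))) * (K^n * q ^ ((n:ℝ)^2/4)) * ((1/4) * 1) := by
          gcongr ?_ * _ * (?_ * ?_) <;> first | exact key | exact h14 | linarith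
      _ = 1/2 * (2 * ((n:ℝ)+1) * K^n * q ^ ((n:ℝ)^2/4)) := by ring
  calc ‖2 * ((n:ℝ)+1+1) * K^(n+1) * q ^ (((n:ℝ)+1)^2/4)‖
      = 2 * ((n:ℝ)+1+1) * K^(n+1) * q ^ (((n:ℝ)+1)^2/4) := by
        rw [Real.norm_eq_abs, abs_of_pos (by positivity)]
    _ ≤ 1/2 * (2 * ((n:ℝ)+1) * K^n * q ^ ((n:ℝ)^2/4)) := hb
    _ = 1/2 * ‖2 * ((n:ℝ)+1) * K^n * q ^ ((n:ℝ)^2/4)‖ := by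
        rw [Real.norm_eq_abs, abs_of_pos (by positivity)]
  

lemma summable_wterm {q : ℝ} (hq0 : 0 < q) (hq1 : q < 1) (X Λ : ℂ) :
    Summable (wterm q X Λ) := by
  apply Summable.of_norm_bounded (summable_majorant hq0 hq1 (le_max_left 1 _ : 1 ≤ KC q X Λ))
  intro n
  have := norm_wterm_le hq0 hq1 X Λ n
  push_cast
  exact this

lemma rpow_combine {q : ℝ} (hq0 : 0 < q) (a b c : ℝ) (k : ℕ) :
    q^a * (q^b)^k * q^c = q^(a + b*(k:ℝ) + c) := by
  rw [← Real.rpow_natCast (q^b) k, ← Real.rpow_mul hq0.le, ← Real.rpow_add hq0,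
    ← Real.rpow_add hq0]

lemma step_identity {q : ℝ} (hq0 : 0 < q) (hq1 : q < 1) {X Λ : ℂ} (hX : X ≠ 0) (hΛ : Λ ≠ 0)
    (n : ℕ) :
    (Λ + Λ⁻¹) * wterm q X Λ (n+1)
      = (((q ^ ((1:ℝ)/4) : ℝ) : ℂ) * X⁻¹) *
          (wterm q (((q ^ (-(1:ℝ)/2) : ℝ) : ℂ) * X) Λ (n+2)
            - wterm q (((q ^ ((1:ℝ)/2) : ℝ) : ℂ) * X) Λ (n+2))
        + (((q ^ ((1:ℝ)/4) : ℝ) : ℂ) * X) * wterm q (((q ^ ((1:ℝ)/2) : ℝ) : ℂ) * X) Λ n := by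
  have hDn : Dp q n ≠ 0 := Dp_ne hq0 hq1 n
  have h1 : (1:ℂ) - (q:ℂ)^(n+1) ≠ 0 := one_sub_pow_ne hq0 hq1 (n+1) (by omega)
  have h2 : (1:ℂ) - (q:ℂ)^(n+2) ≠ 0 := one_sub_pow_ne hq0 hq1 (n+2) (by omega)
  -- coefficient identities
  have hc1 : ((q ^ ((1:ℝ)/4) : ℝ) : ℂ) * (((q ^ (-(1:ℝ)/2))^(n+2) : ℝ) : ℂ) *
      ((q ^ (((n+2 : ℕ) : ℝ)^2/4) : ℝ) : ℂ) = ((q ^ (((n+1 : ℕ) : ℝ)^2/4) : ℝ) : ℂ) := by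
    rw [← Complex.ofReal_mul, ← Complex.ofReal_mul]
    congr 1
    rw [rpow_combine hq0]
    congr 1
    push_cast
    ring
  have hc2 : ((q ^ ((1:ℝ)/4) : ℝ) : ℂ) * (((q ^ ((1:ℝ)/2))^(n+2) : ℝ) : ℂ) *
      ((q ^ (((n+2 : ℕ) : ℝ)^2/4) : ℝ) : ℂ)
      = ((q ^ (((n+1 : ℕ) : ℝ)^2/4) : ℝ) : ℂ) * (q:ℂ)^(n+2) := by
    rw [← Complex.ofReal_mul, ← Complex.ofReal_mul]
    rw [show (q:ℂ)^(n+2) = ((q^(n+2) : ℝ) : ℂ) by push_cast; ring, ← Complex.ofReal_mul]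
    congr 1
    rw [rpow_combine hq0, ← Real.rpow_natCast q (n+2), ← Real.rpow_add hq0]
    congr 1
    push_cast
    ring
  have hc3 : ((q ^ ((1:ℝ)/4) : ℝ) : ℂ) * (((q ^ ((1:ℝ)/2))^n : ℝ) : ℂ) *
      ((q ^ (((n : ℕ) : ℝ)^2/4) : ℝ) : ℂ) = ((q ^ (((n+1 : ℕ) : ℝ)^2/4) : ℝ) : ℂ) := by
    rw [← Complex.ofReal_mul, ← Complex.ofReal_mul]
    congr 1
    rw [rpow_combine hq0]
    congr 1
    push_cast
    ring
  have hinv : X * X⁻¹ = 1 := mul_inv_cancel₀ hX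
  rw [wterm_scale q (q ^ (-(1:ℝ)/2)) X Λ (n+2), wterm_scale q (q ^ ((1:ℝ)/2)) X Λ (n+2),
    wterm_scale q (q ^ ((1:ℝ)/2)) X Λ n, wterm_eq, wterm_eq, wterm_eq]
  have hL : (Λ + Λ⁻¹) * (((q ^ (((n+1 : ℕ) : ℝ)^2/4) : ℝ) : ℂ) * X^(n+1) * PbarA1 q (n+1) Λ
        / Dp q (n+1))
      = ((q ^ (((n+1 : ℕ) : ℝ)^2/4) : ℝ) : ℂ) * X^(n+1) *
        ((Λ + Λ⁻¹) * PbarA1 q (n+1) Λ) / Dp q (n+1) := by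
    ring
  rw [hL, pbar_rec hq0 hq1 hΛ n, mul_sub]
  have ha : ((q ^ ((1:ℝ)/4) : ℝ) : ℂ) * X⁻¹ * ((((q ^ (-(1:ℝ)/2))^(n+2) : ℝ) : ℂ) *
        (((q ^ (((n+2 : ℕ) : ℝ)^2/4) : ℝ) : ℂ) * X^(n+2) * PbarA1 q (n+2) Λ / Dp q (n+2)))
      = ((q ^ (((n+1 : ℕ) : ℝ)^2/4) : ℝ) : ℂ) * X^(n+1) * PbarA1 q (n+2) Λ / Dp q (n+2) := by
    linear_combination (X⁻¹ * X^(n+2) * PbarA1 q (n+2) Λ / Dp q (n+2)) * hc1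
      + (((q ^ (((n+1 : ℕ) : ℝ)^2/4) : ℝ) : ℂ) * X^(n+1) * PbarA1 q (n+2) Λ / Dp q (n+2)) * hinv
  have hb : ((q ^ ((1:ℝ)/4) : ℝ) : ℂ) * X⁻¹ * ((((q ^ ((1:ℝ)/2))^(n+2) : ℝ) : ℂ) *
        (((q ^ (((n+2 : ℕ) : ℝ)^2/4) : ℝ) : ℂ) * X^(n+2) * PbarA1 q (n+2) Λ / Dp q (n+2)))
      = ((q ^ (((n+1 : ℕ) : ℝ)^2/4) : ℝ) : ℂ) * (q:ℂ)^(n+2) * X^(n+1) * PbarA1 q (n+2) Λ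
          / Dp q (n+2) := by
    linear_combination (X⁻¹ * X^(n+2) * PbarA1 q (n+2) Λ / Dp q (n+2)) * hc2
      + (((q ^ (((n+1 : ℕ) : ℝ)^2/4) : ℝ) : ℂ) * (q:ℂ)^(n+2) * X^(n+1) * PbarA1 q (n+2) Λ
          / Dp q (n+2)) * hinv
  have hcn : ((q ^ ((1:ℝ)/4) : ℝ) : ℂ) * X * ((((q ^ ((1:ℝ)/2))^n : ℝ) : ℂ) *
        (((q ^ (((n : ℕ) : ℝ)^2/4) : ℝ) : ℂ) * X^n * PbarA1 q n Λ / Dp q n))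
      = ((q ^ (((n+1 : ℕ) : ℝ)^2/4) : ℝ) : ℂ) * X^(n+1) * PbarA1 q n Λ / Dp q n := by
    linear_combination (X * X^n * PbarA1 q n Λ / Dp q n) * hc3
  rw [ha, hb, hcn, Dp_succ q (n+1), Dp_succ q n]
  field_simp

lemma base_identity {q : ℝ} (hq0 : 0 < q) (hq1 : q < 1) {X Λ : ℂ} (hX : X ≠ 0) (hΛ : Λ ≠ 0) :
    (Λ + Λ⁻¹) * wterm q X Λ 0
      = (((q ^ ((1:ℝ)/4) : ℝ) : ℂ) * X⁻¹) *
          (wterm q (((q ^ (-(1:ℝ)/2) : ℝ) : ℂ) * X) Λ 1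
            - wterm q (((q ^ ((1:ℝ)/2) : ℝ) : ℂ) * X) Λ 1) := by
  have hinv : X * X⁻¹ = 1 := mul_inv_cancel₀ hX
  have h1 : (1:ℂ) - (q:ℂ) ≠ 0 := by
    have := one_sub_pow_ne hq0 hq1 1 le_rfl
    rwa [pow_one] at this
  have hD1 : Dp q 1 = 1 - (q:ℂ)^(1:ℕ) := by
    rw [Dp]
    simp
  have hD0 : Dp q 0 = 1 := by simp [Dp]
  have v0 : ((q ^ (((0:ℕ):ℝ)^2/4) : ℝ) : ℂ) = 1 := by
    norm_num
  have m1 : ((q ^ ((1:ℝ)/4) : ℝ) : ℂ) * ((q ^ (-(1:ℝ)/2) : ℝ) : ℂ) *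
      ((q ^ ((1:ℝ)/4) : ℝ) : ℂ) = 1 := by
    rw [← Complex.ofReal_mul, ← Complex.ofReal_mul]
    rw [← Real.rpow_add hq0, ← Real.rpow_add hq0]
    norm_num
  have m2 : ((q ^ ((1:ℝ)/4) : ℝ) : ℂ) * ((q ^ ((1:ℝ)/2) : ℝ) : ℂ) *
      ((q ^ ((1:ℝ)/4) : ℝ) : ℂ) = (q:ℂ) := by
    rw [← Complex.ofReal_mul, ← Complex.ofReal_mul]
    rw [← Real.rpow_add hq0, ← Real.rpow_add hq0]
    norm_num
  have v1 : ((q ^ (((1:ℕ):ℝ)^2/4) : ℝ) : ℂ) = ((q ^ ((1:ℝ)/4) : ℝ) : ℂ) := by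
    norm_num
  rw [wterm_scale, wterm_scale, wterm_eq, wterm_eq, pbar_zeroth, pbar_oneth,
    hD1, hD0, v0, v1]
  simp only [pow_one]
  have h1' : (1 - (q:ℂ)) * (1 - (q:ℂ))⁻¹ = 1 := mul_inv_cancel₀ h1
  linear_combination -(X⁻¹*X*(Λ+Λ⁻¹)*(1-(q:ℂ))⁻¹) * m1 + (X⁻¹*X*(Λ+Λ⁻¹)*(1-(q:ℂ))⁻¹) * m2
    - (Λ+Λ⁻¹)*X*X⁻¹ * h1' - (Λ+Λ⁻¹) * hinv

end QTodaAux


set_option maxHeartbeats 1000000 in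
open QTodaAux in
/-- the q-Toda difference equation for the global q-Whittaker function. -/
theorem whitA1_qToda (q : ℝ) (hq0 : 0 < q) (hq1 : q < 1)
    (X Λ : ℂ) (hX : X ≠ 0) (hΛ : Λ ≠ 0) :
    ((q ^ ((1 : ℝ) / 4) : ℝ) : ℂ) *
      (X * whitA1 q (((q ^ ((1 : ℝ) / 2) : ℝ) : ℂ) * X) Λ +
        X⁻¹ * (whitA1 q (((q ^ (-(1 : ℝ) / 2) : ℝ) : ℂ) * X) Λ -
               whitA1 q (((q ^ ((1 : ℝ) / 2) : ℝ) : ℂ) * X) Λ)) =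
    (Λ + Λ⁻¹) * whitA1 q X Λ := by
  have S1 := summable_wterm hq0 hq1 (((q ^ ((1:ℝ)/2) : ℝ) : ℂ) * X) Λ
  have S2 := summable_wterm hq0 hq1 (((q ^ (-(1:ℝ)/2) : ℝ) : ℂ) * X) Λ
  have S0 := summable_wterm hq0 hq1 X Λ
  set c4 : ℂ := ((q ^ ((1:ℝ)/4) : ℝ) : ℂ) with hc4
  set t1 : ℕ → ℂ := wterm q (((q ^ ((1:ℝ)/2) : ℝ) : ℂ) * X) Λ with ht1
  set t2 : ℕ → ℂ := wterm q (((q ^ (-(1:ℝ)/2) : ℝ) : ℂ) * X) Λ with ht2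
  set t0 : ℕ → ℂ := wterm q X Λ with ht0
  have hA : Summable (fun n => (c4 * X) * t1 n) := S1.mul_left _
  have hEsub : Summable (fun n => t2 n - t1 n) := S2.sub S1
  have hE : Summable (fun n => (c4 * X⁻¹) * (t2 n - t1 n)) := hEsub.mul_left _
  have hC : Summable (fun n => (Λ + Λ⁻¹) * t0 n) := S0.mul_left _
  have hE1 : Summable (fun n : ℕ => (c4 * X⁻¹) * (t2 (n+1) - t1 (n+1))) :=
    (summable_nat_add_iff 1).2 hE
  have hE2 : Summable (fun n : ℕ => (c4 * X⁻¹) * (t2 (n+1+1) - t1 (n+1+1))) :=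
    (summable_nat_add_iff 1).2 hE1
  have hE0 : (c4 * X⁻¹) * (t2 0 - t1 0) = 0 := by
    have h00 : t2 0 = t1 0 := by
      rw [ht1, ht2]
      simp [wterm]
    rw [h00, sub_self, mul_zero]
  have main : ∀ n : ℕ, (Λ + Λ⁻¹) * t0 (n+1)
      = (c4 * X⁻¹) * (t2 (n+1+1) - t1 (n+1+1)) + (c4 * X) * t1 n :=
    fun n => step_identity hq0 hq1 hX hΛ n
  have base : (Λ + Λ⁻¹) * t0 0 = (c4 * X⁻¹) * (t2 (0+1) - t1 (0+1)) :=
    base_identity hq0 hq1 hX hΛ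
  have key : ∑' n, ((Λ + Λ⁻¹) * t0 n)
      = ∑' n, ((c4 * X⁻¹) * (t2 n - t1 n)) + ∑' n, ((c4 * X) * t1 n) := by
    calc ∑' n, ((Λ + Λ⁻¹) * t0 n)
        = (Λ + Λ⁻¹) * t0 0 + ∑' n, ((Λ + Λ⁻¹) * t0 (n+1)) := Summable.tsum_eq_zero_add hC
      _ = (c4 * X⁻¹) * (t2 (0+1) - t1 (0+1))
          + ∑' n, ((c4 * X⁻¹) * (t2 (n+1+1) - t1 (n+1+1)) + (c4 * X) * t1 n) := by
            rw [base]
            exact congrArg _ (tsum_congr main)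
      _ = (c4 * X⁻¹) * (t2 (0+1) - t1 (0+1))
          + (∑' n, ((c4 * X⁻¹) * (t2 (n+1+1) - t1 (n+1+1))) + ∑' n, ((c4 * X) * t1 n)) := by
            rw [Summable.tsum_add hE2 hA]
      _ = (∑' n, ((c4 * X⁻¹) * (t2 (n+1) - t1 (n+1)))) + ∑' n, ((c4 * X) * t1 n) := by
            rw [Summable.tsum_eq_zero_add hE1]
            ring
      _ = ((c4 * X⁻¹) * (t2 0 - t1 0) + ∑' n, ((c4 * X⁻¹) * (t2 (n+1) - t1 (n+1))))
          + ∑' n, ((c4 * X) * t1 n) := by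
            rw [hE0, zero_add]
      _ = ∑' n, ((c4 * X⁻¹) * (t2 n - t1 n)) + ∑' n, ((c4 * X) * t1 n) := by
            rw [← Summable.tsum_eq_zero_add hE]
  rw [whit_eq, whit_eq, whit_eq]
  calc c4 * (X * ∑' n, t1 n + X⁻¹ * (∑' n, t2 n - ∑' n, t1 n))
      = (c4 * X) * ∑' n, t1 n + (c4 * X⁻¹) * ∑' n, (t2 n - t1 n) := by
        rw [← Summable.tsum_sub S2 S1]
        ring
    _ = ∑' n, ((c4 * X) * t1 n) + ∑' n, ((c4 * X⁻¹) * (t2 n - t1 n)) := by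
        rw [tsum_mul_left, tsum_mul_left]
    _ = ∑' n, ((Λ + Λ⁻¹) * t0 n) := by rw [key]; ring
    _ = (Λ + Λ⁻¹) * ∑' n, t0 n := tsum_mul_left

end
end

section
/- Fix a real number q with 0 < q < 1. For all X ∈ ℂ and all Λ ∈ ℂ with Λ ∉ {0, 1, −1}, the global q-Whittaker function Ψ̃ of type A₁ satisfies the dual difference equation −q^{1/4} · ( Ψ̃(X, q^{1/2}Λ) − Ψ̃(X, q^{−1/2}Λ) ) / (Λ − Λ^{−1}) = X · Ψ̃(X, Λ). (Equation (4.28) of the paper, the Λ-dependence from Theorem 3.2(ii) in the rank-one case.) -/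
open scoped BigOperators
open Filter

noncomputable section

namespace WhitAux

/-- q-factorial -/
def qfac (q : ℝ) (n : ℕ) : ℂ := ∏ j ∈ Finset.Icc 1 n, (1 - (q : ℂ) ^ j)

/-- q-binomial-ish coefficient as in PbarA1 -/
def Bq (q : ℝ) (n k : ℕ) : ℂ :=
  ∏ i ∈ Finset.range k, (1 - (q : ℂ) ^ (n - i)) / (1 - (q : ℂ) ^ (i + 1))

variable {q : ℝ} (hq0 : 0 < q) (hq1 : q < 1)

lemma cpow_ne_one (hq0 : 0 < q) (hq1 : q < 1) {j : ℕ} (hj : 1 ≤ j) : (q : ℂ) ^ j ≠ 1 := by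
  have h : (q : ℂ) ^ j = ((q ^ j : ℝ) : ℂ) := by push_cast; ring
  rw [h]
  intro hc
  have : (q : ℝ) ^ j = 1 := by exact_mod_cast hc
  have h2 : (q : ℝ) ^ j < 1 := pow_lt_one₀ hq0.le hq1 (by omega)
  linarith

lemma one_sub_cpow_ne_zero (hq0 : 0 < q) (hq1 : q < 1) {j : ℕ} (hj : 1 ≤ j) :
    1 - (q : ℂ) ^ j ≠ 0 := by
  intro h
  exact cpow_ne_one hq0 hq1 hj (sub_eq_zero.mp h).symm

lemma qfac_ne_zero (hq0 : 0 < q) (hq1 : q < 1) (n : ℕ) : qfac q n ≠ 0 := by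
  refine Finset.prod_ne_zero_iff.mpr fun j hj => ?_
  exact one_sub_cpow_ne_zero hq0 hq1 (Finset.mem_Icc.mp hj).1

lemma qfac_succ (n : ℕ) : qfac q (n + 1) = qfac q n * (1 - (q : ℂ) ^ (n + 1)) :=
  Finset.prod_Icc_succ_top (by omega) _

lemma Bq_eq (hq0 : 0 < q) (hq1 : q < 1) {n k : ℕ} (hk : k ≤ n) :
    Bq q n k = qfac q n / (qfac q k * qfac q (n - k)) := by
  induction k with
  | zero =>
      have h0 : qfac q 0 = 1 := by simp [qfac]
      simp only [Bq, Finset.range_zero, Finset.prod_empty, Nat.sub_zero, h0, one_mul]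
      rw [div_self (qfac_ne_zero hq0 hq1 n)]
  | succ k ih =>
      have hk' : k ≤ n := by omega
      have h1 : qfac q (n - k) = qfac q (n - (k + 1)) * (1 - (q : ℂ) ^ (n - k)) := by
        have : n - k = (n - (k + 1)) + 1 := by omega
        rw [this, qfac_succ]
      have h2 : qfac q (k + 1) = qfac q k * (1 - (q : ℂ) ^ (k + 1)) := qfac_succ k
      rw [Bq, Finset.prod_range_succ, ← Bq, ih hk', h2]
      have hne1 : qfac q k ≠ 0 := qfac_ne_zero hq0 hq1 k
      have hne2 : qfac q (n - (k+1)) ≠ 0 := qfac_ne_zero hq0 hq1 _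
      have hne3 : (1 - (q : ℂ) ^ (k + 1)) ≠ 0 := one_sub_cpow_ne_zero hq0 hq1 (by omega)
      have hne4 : (1 - (q : ℂ) ^ (n - k)) ≠ 0 := one_sub_cpow_ne_zero hq0 hq1 (by omega)
      rw [h1]
      field_simp

lemma Bq_symm (hq0 : 0 < q) (hq1 : q < 1) {n k : ℕ} (hk : k ≤ n) :
    Bq q n k = Bq q n (n - k) := by
  rw [Bq_eq hq0 hq1 hk, Bq_eq hq0 hq1 (by omega : n - k ≤ n)]
  have : n - (n - k) = k := by omega
  rw [this, mul_comm]


/-- cast of rpow helpers -/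
lemma crp_mul (hq0 : 0 < q) (x y : ℝ) :
    ((q ^ x : ℝ) : ℂ) * ((q ^ y : ℝ) : ℂ) = ((q ^ (x + y) : ℝ) : ℂ) := by
  rw [Real.rpow_add hq0]; push_cast; ring

lemma crp_pow (hq0 : 0 < q) (x : ℝ) (m : ℕ) :
    ((q ^ x : ℝ) : ℂ) ^ m = ((q ^ (x * m) : ℝ) : ℂ) := by
  rw [Real.rpow_mul hq0.le, Real.rpow_natCast]; push_cast; ring

lemma cpow_eq_crp (hq0 : 0 < q) (m : ℕ) : (q : ℂ) ^ m = ((q ^ (m : ℝ) : ℝ) : ℂ) := by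
  rw [Real.rpow_natCast]; push_cast; ring

/-- Representation of `PbarA1` as a full one-sided sum. -/
lemma Pbar_eq_H (hq0 : 0 < q) (hq1 : q < 1) (n : ℕ) {Λ : ℂ} (hΛ : Λ ≠ 0) :
    PbarA1 q n Λ = ∑ k ∈ Finset.range (n + 1), Bq q n k * (Λ ^ (n - k) * Λ⁻¹ ^ k) := by
  have hinv : Λ * Λ⁻¹ = 1 := mul_inv_cancel₀ hΛ
  -- b k := Bq q n k * Λ^(n-k) * Λ⁻¹^k
  set b : ℕ → ℂ := fun k => Bq q n k * (Λ ^ (n - k) * Λ⁻¹ ^ k) with hb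
  -- step 1: PbarA1 as sum over Icc 0 (n/2)
  have h0 : PbarA1 q n Λ = ∑ j ∈ Finset.Icc 0 (n / 2), Bq q n j * Msym (n - 2 * j) Λ := by
    have hins : Finset.Icc 0 (n / 2) = insert 0 (Finset.Icc 1 (n / 2)) := by
      ext x; simp [Finset.mem_Icc, Finset.mem_insert]; omega
    rw [hins, Finset.sum_insert (by simp)]
    simp only [PbarA1, Bq]
    simp
  rw [h0]
  -- step 2: termwise expansion
  have hterm : ∀ j ∈ Finset.Icc 0 (n / 2),
      Bq q n j * Msym (n - 2 * j) Λ = b j + (if 2 * j < n then b (n - j) else 0) := by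
    intro j hj
    have hj2 : 2 * j ≤ n := by
      have := (Finset.mem_Icc.mp hj).2; omega
    by_cases hc : 2 * j < n
    · have hr : n - 2 * j ≠ 0 := by omega
      rw [if_pos hc, Msym, if_neg hr, hb]
      simp only
      have e1 : Λ ^ (n - j) = Λ ^ (n - 2 * j) * Λ ^ j := by
        rw [← pow_add]; congr 1; omega
      have e2 : Λ⁻¹ ^ (n - j) = Λ⁻¹ ^ (n - 2 * j) * Λ⁻¹ ^ j := by
        rw [← pow_add]; congr 1; omega
      have e3 : Λ ^ j * Λ⁻¹ ^ j = 1 := by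
        rw [← mul_pow, hinv, one_pow]
      rw [← Bq_symm hq0 hq1 (by omega : j ≤ n)]
      have hnnj : n - (n - j) = j := by omega
      rw [hnnj, e1, e2]
      calc Bq q n j * (Λ ^ (n - 2*j) + Λ⁻¹ ^ (n - 2*j))
          = Bq q n j * (Λ ^ (n - 2*j) * Λ ^ j * Λ⁻¹ ^ j)
            + Bq q n j * (Λ ^ j * (Λ⁻¹ ^ (n - 2*j) * Λ⁻¹ ^ j)) := by
              rw [mul_assoc (Λ ^ (n - 2*j)), e3]
              have : Λ ^ j * (Λ⁻¹ ^ (n - 2*j) * Λ⁻¹ ^ j) = Λ⁻¹ ^ (n-2*j) * (Λ ^ j * Λ⁻¹ ^ j) := by ring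
              rw [this, e3]
              ring
        _ = _ := by ring
    · have hjn : 2 * j = n := by omega
      have hr : n - 2 * j = 0 := by omega
      rw [if_neg hc, Msym, if_pos hr, hb]
      simp only
      have hnj : n - j = j := by omega
      rw [hnj, ← mul_pow, hinv, one_pow]
      ring
  rw [Finset.sum_congr rfl hterm, Finset.sum_add_distrib, ← Finset.sum_filter]
  -- step 3: identify the two pieces with filters of range (n+1)
  have hA : Finset.Icc 0 (n / 2) = (Finset.range (n + 1)).filter (fun k => 2 * k ≤ n) := by
    ext x; simp [Finset.mem_Icc, Finset.mem_filter, Finset.mem_range]; omega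
  have hB : ∑ j ∈ (Finset.Icc 0 (n / 2)).filter (fun j => 2 * j < n), b (n - j)
      = ∑ k ∈ (Finset.range (n + 1)).filter (fun k => ¬ 2 * k ≤ n), b k := by
    refine Finset.sum_nbij' (fun j => n - j) (fun k => n - k) ?_ ?_ ?_ ?_ ?_
    · intro a ha
      simp only [Finset.mem_filter, Finset.mem_Icc] at ha
      simp only [Finset.mem_filter, Finset.mem_range]
      omega
    · intro a ha
      simp only [Finset.mem_filter, Finset.mem_range] at ha
      simp only [Finset.mem_filter, Finset.mem_Icc]
      omega
    · intro a ha
      simp only [Finset.mem_filter, Finset.mem_Icc] at ha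
      omega
    · intro a ha
      simp only [Finset.mem_filter, Finset.mem_range] at ha
      omega
    · intro a ha; rfl
  rw [hB, hA, Finset.sum_filter_add_sum_filter_not]

lemma sub1 (hq0 : 0 < q) (hq1 : q < 1) {n k : ℕ} (hk : k ≤ n + 1) :
    (1 - (q : ℂ) ^ (n + 1)) * (if k ≤ n then Bq q n k else 0)
      = Bq q (n + 1) k * (1 - (q : ℂ) ^ (n + 1 - k)) := by
  by_cases hkn : k ≤ n
  · rw [if_pos hkn, Bq_eq hq0 hq1 hkn, Bq_eq hq0 hq1 (by omega : k ≤ n + 1)]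
    have e1 : qfac q (n + 1) = qfac q n * (1 - (q : ℂ) ^ (n + 1)) := qfac_succ n
    have e2 : qfac q (n + 1 - k) = qfac q (n - k) * (1 - (q : ℂ) ^ (n + 1 - k)) := by
      have h : (n - k) + 1 = n + 1 - k := by omega
      conv_lhs => rw [← h]
      rw [qfac_succ, h]
    rw [e1, e2]
    have h1 := qfac_ne_zero hq0 hq1 k
    have h2 := qfac_ne_zero hq0 hq1 (n - k)
    have h3 := one_sub_cpow_ne_zero hq0 hq1 (show 1 ≤ n + 1 - k by omega)
    field_simp
  · have hk1 : k = n + 1 := by omega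
    rw [if_neg hkn, hk1]
    simp
lemma sub2 (hq0 : 0 < q) (hq1 : q < 1) {n k : ℕ} (hk : k ≤ n + 1) :
    (1 - (q : ℂ) ^ (n + 1)) * (if 1 ≤ k then Bq q n (k - 1) else 0)
      = Bq q (n + 1) k * (1 - (q : ℂ) ^ k) := by
  by_cases hk1 : 1 ≤ k
  · rw [if_pos hk1, Bq_eq hq0 hq1 (by omega : k - 1 ≤ n), Bq_eq hq0 hq1 hk]
    have e1 : qfac q (n + 1) = qfac q n * (1 - (q : ℂ) ^ (n + 1)) := qfac_succ n
    have e2 : qfac q k = qfac q (k - 1) * (1 - (q : ℂ) ^ k) := by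
      have h : (k - 1) + 1 = k := by omega
      conv_lhs => rw [← h]
      rw [qfac_succ, h]
    have e3 : n - (k - 1) = n + 1 - k := by omega
    rw [e1, e2, e3]
    have h1 := qfac_ne_zero hq0 hq1 (k - 1)
    have h2 := qfac_ne_zero hq0 hq1 (n + 1 - k)
    have h3 := one_sub_cpow_ne_zero hq0 hq1 (show 1 ≤ k by omega)
    field_simp
  · have hk0 : k = 0 := by omega
    rw [if_neg hk1, hk0]
    simp

lemma rp_pow (hq0 : 0 < q) (x : ℝ) (m : ℕ) : (q ^ x) ^ m = q ^ (x * (m : ℝ)) := by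
  rw [← Real.rpow_natCast (q ^ x) m, ← Real.rpow_mul hq0.le]

lemma scal_real (hq0 : 0 < q) {n k : ℕ} (hk : k ≤ n + 1) :
    -(q ^ ((1:ℝ)/4)) *
        ((q ^ ((1:ℝ)/2)) ^ (n + 1 - k) * (q ^ (-(1:ℝ)/2)) ^ k
          - (q ^ (-(1:ℝ)/2)) ^ (n + 1 - k) * (q ^ ((1:ℝ)/2)) ^ k)
      = q ^ ((-(2*(n:ℝ)) - 1)/4) * ((q:ℝ) ^ k - (q:ℝ) ^ (n + 1 - k)) := by
  have hm : ((n + 1 - k : ℕ) : ℝ) = (n : ℝ) + 1 - (k : ℝ) := by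
    push_cast [Nat.cast_sub hk]; ring
  rw [rp_pow hq0, rp_pow hq0, rp_pow hq0, rp_pow hq0,
    ← Real.rpow_natCast q k, ← Real.rpow_natCast q (n + 1 - k), hm]
  rw [show ((1:ℝ)/2) * ((n:ℝ) + 1 - (k:ℝ)) = ((-(2*(n:ℝ)) - 1)/4) + ((n:ℝ) + 1 - (k:ℝ)) - ((1:ℝ)/4) - (-(1:ℝ)/2) * (k:ℝ) from by ring]
  rw [show (-(1:ℝ)/2) * ((n:ℝ) + 1 - (k:ℝ)) = ((-(2*(n:ℝ)) - 1)/4) + (k:ℝ) - ((1:ℝ)/4) - ((1:ℝ)/2) * (k:ℝ) from by ring]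
  rw [Real.rpow_sub hq0, Real.rpow_sub hq0, Real.rpow_sub hq0, Real.rpow_sub hq0,
    Real.rpow_add hq0, Real.rpow_add hq0]
  have h1 : q ^ ((1:ℝ)/4) ≠ 0 := ne_of_gt (Real.rpow_pos_of_pos hq0 _)
  have h2 : q ^ ((-(1:ℝ)/2) * (k:ℝ)) ≠ 0 := ne_of_gt (Real.rpow_pos_of_pos hq0 _)
  have h3 : q ^ (((1:ℝ)/2) * (k:ℝ)) ≠ 0 := ne_of_gt (Real.rpow_pos_of_pos hq0 _)
  field_simp
  ring

lemma scal (hq0 : 0 < q) {n k : ℕ} (hk : k ≤ n + 1) :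
    -((q ^ ((1:ℝ)/4) : ℝ) : ℂ) *
        (((q ^ ((1:ℝ)/2) : ℝ) : ℂ) ^ (n + 1 - k) * ((q ^ (-(1:ℝ)/2) : ℝ) : ℂ) ^ k
          - ((q ^ (-(1:ℝ)/2) : ℝ) : ℂ) ^ (n + 1 - k) * ((q ^ ((1:ℝ)/2) : ℝ) : ℂ) ^ k)
      = ((q ^ ((-(2*(n:ℝ)) - 1)/4) : ℝ) : ℂ) * ((q : ℂ) ^ k - (q : ℂ) ^ (n + 1 - k)) := by
  exact_mod_cast congrArg (fun x : ℝ => (x : ℂ)) (scal_real hq0 hk)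

/-- The key termwise difference identity. -/
lemma key (hq0 : 0 < q) (hq1 : q < 1) (n : ℕ) {Λ : ℂ} (hΛ : Λ ≠ 0) :
    -((q ^ ((1:ℝ)/4) : ℝ) : ℂ) *
        (PbarA1 q (n + 1) (((q ^ ((1:ℝ)/2) : ℝ) : ℂ) * Λ)
          - PbarA1 q (n + 1) (((q ^ (-(1:ℝ)/2) : ℝ) : ℂ) * Λ))
      = ((q ^ ((-(2*(n:ℝ)) - 1)/4) : ℝ) : ℂ) * ((1 - (q : ℂ) ^ (n + 1)) *
          ((Λ - Λ⁻¹) * PbarA1 q n Λ)) := by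
  set a : ℂ := ((q ^ ((1:ℝ)/2) : ℝ) : ℂ) with hadef
  set b : ℂ := ((q ^ (-(1:ℝ)/2) : ℝ) : ℂ) with hbdef
  have hab : a * b = 1 := by
    rw [hadef, hbdef, crp_mul hq0]
    norm_num
  have ha0 : a ≠ 0 := by
    rw [hadef]
    exact_mod_cast ne_of_gt (Real.rpow_pos_of_pos hq0 _)
  have hb0 : b ≠ 0 := by
    rw [hbdef]
    exact_mod_cast ne_of_gt (Real.rpow_pos_of_pos hq0 _)
  have hainv : a⁻¹ = b := inv_eq_of_mul_eq_one_right hab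
  have hbinv : b⁻¹ = a := inv_eq_of_mul_eq_one_right (by rw [mul_comm]; exact hab)
  have haΛ : a * Λ ≠ 0 := mul_ne_zero ha0 hΛ
  have hbΛ : b * Λ ≠ 0 := mul_ne_zero hb0 hΛ
  rw [Pbar_eq_H hq0 hq1 (n+1) haΛ, Pbar_eq_H hq0 hq1 (n+1) hbΛ, Pbar_eq_H hq0 hq1 n hΛ]
  -- expand powers of a*Λ and b*Λ
  have expand : ∀ X Y : ℂ, X⁻¹ = Y → X ≠ 0 → ∀ k ∈ Finset.range (n + 2),
      Bq q (n+1) k * ((X * Λ) ^ (n + 1 - k) * (X * Λ)⁻¹ ^ k)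
        = Bq q (n+1) k * (X ^ (n+1-k) * Y ^ k) * (Λ ^ (n+1-k) * Λ⁻¹ ^ k) := by
    intro X Y hXY hX0 k hkr
    rw [mul_inv, hXY, mul_pow, mul_pow]
    ring
  rw [Finset.sum_congr rfl (expand a b hainv ha0), Finset.sum_congr rfl (expand b a hbinv hb0)]
  -- LHS as a single sum
  rw [← Finset.sum_sub_distrib, Finset.mul_sum]
  -- RHS : distribute (Λ - Λ⁻¹) into the H-sum of PbarA1 q n
  have hrhs : (Λ - Λ⁻¹) * (∑ k ∈ Finset.range (n + 1), Bq q n k * (Λ ^ (n - k) * Λ⁻¹ ^ k))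
      = ∑ k ∈ Finset.range (n + 2),
          ((if k ≤ n then Bq q n k else 0) - (if 1 ≤ k then Bq q n (k-1) else 0))
            * (Λ ^ (n + 1 - k) * Λ⁻¹ ^ k) := by
    simp only [sub_mul]
    rw [Finset.sum_sub_distrib]
    congr 1
    · conv_rhs => rw [Finset.sum_range_succ]
      rw [if_neg (by omega : ¬ (n + 1 ≤ n)), zero_mul, add_zero, Finset.mul_sum]
      refine Finset.sum_congr rfl fun k hk => ?_
      have hkn : k ≤ n := by
        have := Finset.mem_range.mp hk; omega
      rw [if_pos hkn]
      have e : Λ ^ (n + 1 - k) = Λ * Λ ^ (n - k) := by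
        have h : n + 1 - k = (n - k) + 1 := by omega
        rw [h]; ring
      rw [e]
      ring
    · conv_rhs => rw [Finset.sum_range_succ']
      rw [if_neg (by omega : ¬ (1 ≤ 0)), zero_mul, add_zero, Finset.mul_sum]
      refine Finset.sum_congr rfl fun k hk => ?_
      rw [if_pos (by omega : 1 ≤ k + 1), Nat.add_sub_cancel]
      have e1 : n + 1 - (k + 1) = n - k := by omega
      have e2 : Λ⁻¹ ^ (k + 1) = Λ⁻¹ * Λ⁻¹ ^ k := by ring
      rw [e1, e2]
      ring
  rw [hrhs, Finset.mul_sum, Finset.mul_sum]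
  refine Finset.sum_congr rfl fun k hk => ?_
  have hkk : k ≤ n + 1 := by
    have := Finset.mem_range.mp hk; omega
  have h1 := sub1 hq0 hq1 (n := n) (k := k) hkk
  have h2 := sub2 hq0 hq1 (n := n) (k := k) hkk
  have hs := scal hq0 (n := n) (k := k) hkk
  rw [hadef, hbdef]
  linear_combination (Bq q (n+1) k * (Λ ^ (n+1-k) * Λ⁻¹ ^ k)) * hs
    - ((q ^ ((-(2*(n:ℝ)) - 1)/4) : ℝ) : ℂ) * (Λ ^ (n+1-k) * Λ⁻¹ ^ k) * h1
    + ((q ^ ((-(2*(n:ℝ)) - 1)/4) : ℝ) : ℂ) * (Λ ^ (n+1-k) * Λ⁻¹ ^ k) * h2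

lemma norm_one_sub_cpow (hq0 : 0 < q) (hq1 : q < 1) {j : ℕ} (hj : 1 ≤ j) :
    ‖1 - (q : ℂ) ^ j‖ = 1 - q ^ j := by
  have h : 1 - (q : ℂ) ^ j = ((1 - q ^ j : ℝ) : ℂ) := by push_cast; ring
  rw [h, Complex.norm_real, Real.norm_of_nonneg]
  have : q ^ j < 1 := pow_lt_one₀ hq0.le hq1 (by omega)
  linarith

lemma norm_Bq_le (hq0 : 0 < q) (hq1 : q < 1) {n k : ℕ} (hk : k ≤ n) :
    ‖Bq q n k‖ ≤ ((1 - q)⁻¹) ^ n := by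
  have hK1 : (1 : ℝ) ≤ (1 - q)⁻¹ := by
    rw [le_inv_comm₀] <;> linarith
  calc ‖Bq q n k‖ ≤ ((1 - q)⁻¹) ^ k := by
        rw [Bq]
        rw [norm_prod]
        calc ∏ i ∈ Finset.range k, ‖(1 - (q : ℂ) ^ (n - i)) / (1 - (q : ℂ) ^ (i + 1))‖
            ≤ ∏ i ∈ Finset.range k, (1 - q)⁻¹ := by
              refine Finset.prod_le_prod (fun i _ => norm_nonneg _) fun i hi => ?_
              have hik : i < k := Finset.mem_range.mp hi
              rw [norm_div, norm_one_sub_cpow hq0 hq1 (by omega : 1 ≤ n - i),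
                norm_one_sub_cpow hq0 hq1 (by omega : 1 ≤ i + 1)]
              have h1 : 1 - q ^ (n - i) ≤ 1 := by
                have : (0:ℝ) < q ^ (n - i) := pow_pos hq0 _
                linarith
              have h2 : 1 - q ≤ 1 - q ^ (i + 1) := by
                have : q ^ (i + 1) ≤ q := by
                  calc q ^ (i + 1) ≤ q ^ 1 := by
                        exact pow_le_pow_of_le_one hq0.le hq1.le (by omega)
                    _ = q := pow_one q
                linarith
              rw [div_le_iff₀ (by linarith : (0:ℝ) < 1 - q ^ (i + 1))]
              calc 1 - q ^ (n - i) ≤ 1 := h1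
                _ = (1 - q)⁻¹ * (1 - q) := by
                      rw [inv_mul_cancel₀ (by linarith : (1:ℝ) - q ≠ 0)]
                _ ≤ (1 - q)⁻¹ * (1 - q ^ (i + 1)) := by
                      have : (0:ℝ) ≤ (1 - q)⁻¹ := by positivity
                      exact mul_le_mul_of_nonneg_left h2 this
          _ = ((1 - q)⁻¹) ^ k := by rw [Finset.prod_const, Finset.card_range]
    _ ≤ ((1 - q)⁻¹) ^ n := pow_le_pow_right₀ hK1 hk

lemma norm_qfac_inv_le (hq0 : 0 < q) (hq1 : q < 1) (n : ℕ) :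
    ‖(qfac q n)⁻¹‖ ≤ ((1 - q)⁻¹) ^ n := by
  have hlow : (1 - q) ^ n ≤ ‖qfac q n‖ := by
    rw [qfac, norm_prod]
    calc (1 - q) ^ n = ∏ j ∈ Finset.Icc 1 n, (1 - q) := by
          simp [Finset.prod_const, Nat.card_Icc]
      _ ≤ ∏ j ∈ Finset.Icc 1 n, ‖1 - (q : ℂ) ^ j‖ := by
          refine Finset.prod_le_prod (fun i _ => by linarith) fun j hj => ?_
          rw [norm_one_sub_cpow hq0 hq1 (Finset.mem_Icc.mp hj).1]
          have : q ^ j ≤ q := by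
            calc q ^ j ≤ q ^ 1 := pow_le_pow_of_le_one hq0.le hq1.le (Finset.mem_Icc.mp hj).1
              _ = q := pow_one q
          linarith
  rw [norm_inv, inv_pow]
  have hpos : (0:ℝ) < (1 - q) ^ n := pow_pos (by linarith) n
  exact inv_anti₀ hpos hlow

lemma norm_Pbar_le (hq0 : 0 < q) (hq1 : q < 1) (n : ℕ) {Λ : ℂ} (hΛ : Λ ≠ 0) :
    ‖PbarA1 q n Λ‖ ≤ ((n : ℝ) + 1) * (((1 - q)⁻¹ * (max (max ‖Λ‖ ‖Λ⁻¹‖) 1)) ^ n) := by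
  set R : ℝ := max (max ‖Λ‖ ‖Λ⁻¹‖) 1 with hR
  have hR1 : (1:ℝ) ≤ R := le_max_right _ _
  have hR0 : (0:ℝ) ≤ R := by linarith
  rw [Pbar_eq_H hq0 hq1 n hΛ]
  calc ‖∑ k ∈ Finset.range (n + 1), Bq q n k * (Λ ^ (n - k) * Λ⁻¹ ^ k)‖
      ≤ ∑ k ∈ Finset.range (n + 1), ‖Bq q n k * (Λ ^ (n - k) * Λ⁻¹ ^ k)‖ :=
        norm_sum_le _ _
    _ ≤ ∑ k ∈ Finset.range (n + 1), ((1 - q)⁻¹) ^ n * R ^ n := by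
        refine Finset.sum_le_sum fun k hk => ?_
        have hkn : k ≤ n := by have := Finset.mem_range.mp hk; omega
        rw [norm_mul, norm_mul, norm_pow, norm_pow]
        have h1 := norm_Bq_le hq0 hq1 hkn
        have h2 : ‖Λ‖ ^ (n - k) * ‖Λ⁻¹‖ ^ k ≤ R ^ n := by
          calc ‖Λ‖ ^ (n - k) * ‖Λ⁻¹‖ ^ k ≤ R ^ (n - k) * R ^ k := by
                refine mul_le_mul ?_ ?_ (by positivity) (pow_nonneg hR0 _)
                · exact pow_le_pow_left₀ (norm_nonneg _) (le_trans (le_max_left _ _) (le_max_left _ _)) _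
                · exact pow_le_pow_left₀ (norm_nonneg _) (le_trans (le_max_right _ _) (le_max_left _ _)) _
            _ = R ^ n := by rw [← pow_add]; congr 1; omega
        have hq' : (0:ℝ) ≤ (1 - q)⁻¹ := inv_nonneg.mpr (by linarith)
        refine mul_le_mul h1 h2 (by positivity) (pow_nonneg hq' _)
    _ = ((n : ℝ) + 1) * (((1 - q)⁻¹) ^ n * R ^ n) := by
        rw [Finset.sum_const, Finset.card_range]
        push_cast
        ring
    _ = ((n : ℝ) + 1) * (((1 - q)⁻¹ * R) ^ n) := by rw [mul_pow]

lemma summable_whit (hq0 : 0 < q) (hq1 : q < 1) (X : ℂ) {Λ : ℂ} (hΛ : Λ ≠ 0) :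
    Summable (fun n : ℕ => ((q ^ ((n : ℝ) ^ 2 / 4) : ℝ) : ℂ) * X ^ n * PbarA1 q n Λ /
      qfac q n) := by
  set K : ℝ := (1 - q)⁻¹ with hK
  have hKpos : (0:ℝ) < K := by rw [hK]; exact inv_pos.mpr (by linarith)
  set R : ℝ := max (max ‖Λ‖ ‖Λ⁻¹‖) 1 with hR
  have hR1 : (1:ℝ) ≤ R := le_max_right _ _
  set A : ℝ := ‖X‖ * (K * R) * K with hA
  have hA0 : (0:ℝ) ≤ A := by
    rw [hA]
    have : (0:ℝ) ≤ K := hKpos.le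
    positivity
  set g : ℕ → ℝ := fun n => q ^ ((n : ℝ) ^ 2 / 4) * (((n : ℝ) + 1) * A ^ n) with hg
  have hg0 : ∀ n, 0 ≤ g n := by
    intro n; rw [hg]
    have := Real.rpow_pos_of_pos hq0 ((n : ℝ) ^ 2 / 4)
    positivity
  have hgs : Summable g := by
    refine summable_of_ratio_norm_eventually_le (r := 1/2) (by norm_num) ?_
    set ε : ℝ := (A + 1)⁻¹ * (q ^ ((1:ℝ)/4))⁻¹ * (4:ℝ)⁻¹ with hε
    have hq12 : (0:ℝ) ≤ q ^ ((1:ℝ)/2) := (Real.rpow_pos_of_pos hq0 _).le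
    have hq121 : q ^ ((1:ℝ)/2) < 1 := Real.rpow_lt_one hq0.le hq1 (by norm_num)
    have htend := tendsto_pow_atTop_nhds_zero_of_lt_one hq12 hq121
    have hεpos : 0 < ε := by
      rw [hε]
      have := Real.rpow_pos_of_pos hq0 ((1:ℝ)/4)
      positivity
    filter_upwards [htend.eventually (gt_mem_nhds hεpos)] with n hn
    rw [Real.norm_of_nonneg (hg0 _), Real.norm_of_nonneg (hg0 _)]
    have hq4pos : (0:ℝ) < q ^ ((1:ℝ)/4) := Real.rpow_pos_of_pos hq0 _
    have erw : ((n : ℝ) + 1) ^ 2 / 4 = (n : ℝ) ^ 2 / 4 + ((1:ℝ)/4 + (1:ℝ)/2 * (n : ℝ)) := by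
      ring
    calc g (n + 1) = q ^ (((n:ℝ) + 1) ^ 2 / 4) * (((n : ℝ) + 2) * (A * A ^ n)) := by
          rw [hg]
          push_cast
          ring_nf
      _ = (q ^ ((1:ℝ)/4) * (q ^ ((1:ℝ)/2)) ^ n) * q ^ ((n:ℝ) ^ 2 / 4) *
            (((n:ℝ) + 2) * (A * A ^ n)) := by
          rw [erw, Real.rpow_add hq0, Real.rpow_add hq0, rp_pow hq0]
          ring
      _ ≤ (q ^ ((1:ℝ)/4) * ε) * q ^ ((n:ℝ) ^ 2 / 4) *
            ((2 * ((n:ℝ) + 1)) * ((A + 1) * A ^ n)) := by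
          have h1 : (q ^ ((1:ℝ)/2)) ^ n ≤ ε := hn.le
          have h2 : ((n:ℝ) + 2) ≤ 2 * ((n:ℝ) + 1) := by linarith
          have h3 : A ≤ A + 1 := by linarith
          have hrp := (Real.rpow_pos_of_pos hq0 ((n:ℝ) ^ 2 / 4)).le
          have hAn : (0:ℝ) ≤ A ^ n := by positivity
          gcongr
      _ = (2 * (q ^ ((1:ℝ)/4) * (A + 1) * ε)) * g n := by rw [hg]; ring
      _ = (1/2) * g n := by
          rw [hε]
          congr 1
          field_simp
          ring
  refine Summable.of_norm_bounded hgs fun n => ?_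
  rw [div_eq_mul_inv, norm_mul, norm_mul, norm_mul]
  have h1 : ‖((q ^ ((n : ℝ) ^ 2 / 4) : ℝ) : ℂ)‖ = q ^ ((n : ℝ) ^ 2 / 4) := by
    rw [Complex.norm_real, Real.norm_of_nonneg (Real.rpow_pos_of_pos hq0 _).le]
  rw [h1, norm_pow]
  have hP := norm_Pbar_le hq0 hq1 n hΛ
  have hQ := norm_qfac_inv_le hq0 hq1 n
  have hrp := (Real.rpow_pos_of_pos hq0 ((n:ℝ) ^ 2 / 4)).le
  calc q ^ ((n : ℝ) ^ 2 / 4) * ‖X‖ ^ n * ‖PbarA1 q n Λ‖ * ‖(qfac q n)⁻¹‖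
      ≤ q ^ ((n : ℝ) ^ 2 / 4) * ‖X‖ ^ n * (((n : ℝ) + 1) * ((K * R) ^ n)) * K ^ n := by
        gcongr
      _ = g n := by
        simp only [hg, hA, mul_pow]
        ring

def whitTerm (q : ℝ) (X L : ℂ) (n : ℕ) : ℂ :=
  ((q ^ ((n : ℝ) ^ 2 / 4) : ℝ) : ℂ) * X ^ n * PbarA1 q n L / qfac q n

lemma whitA1_eq (q : ℝ) (X L : ℂ) : whitA1 q X L = ∑' n, whitTerm q X L n := rfl

lemma Pbar_zero (L : ℂ) : PbarA1 q 0 L = 1 := by simp [PbarA1, Msym]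

lemma step (hq0 : 0 < q) (hq1 : q < 1) (X : ℂ) {Λ : ℂ} (hΛ0 : Λ ≠ 0) (n : ℕ) :
    -((q ^ ((1:ℝ)/4) : ℝ) : ℂ) *
        (whitTerm q X (((q ^ ((1:ℝ)/2) : ℝ) : ℂ) * Λ) (n + 1)
          - whitTerm q X (((q ^ (-(1:ℝ)/2) : ℝ) : ℂ) * Λ) (n + 1))
      = (Λ - Λ⁻¹) * (X * whitTerm q X Λ n) := by
  have hne : qfac q n ≠ 0 := qfac_ne_zero hq0 hq1 n
  have hne2 : (1 : ℂ) - (q : ℂ) ^ (n + 1) ≠ 0 := one_sub_cpow_ne_zero hq0 hq1 (by omega)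
  have hk := key hq0 hq1 n hΛ0
  have h1 : qfac q (n + 1) = qfac q n * (1 - (q : ℂ) ^ (n + 1)) := qfac_succ n
  have hk2 : -((q ^ ((1:ℝ)/4) : ℝ) : ℂ) *
      (PbarA1 q (n+1) (((q ^ ((1:ℝ)/2) : ℝ) : ℂ) * Λ) / qfac q (n+1)
        - PbarA1 q (n+1) (((q ^ (-(1:ℝ)/2) : ℝ) : ℂ) * Λ) / qfac q (n+1))
      = ((q ^ ((-(2*(n:ℝ)) - 1)/4) : ℝ) : ℂ) * ((Λ - Λ⁻¹) * PbarA1 q n Λ / qfac q n) := by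
    rw [div_sub_div_same, mul_div_assoc', hk, h1]
    field_simp
  have hqq : ((q ^ (((n + 1 : ℕ) : ℝ) ^ 2 / 4) : ℝ) : ℂ) *
      ((q ^ ((-(2*(n:ℝ)) - 1)/4) : ℝ) : ℂ) = ((q ^ ((n : ℝ) ^ 2 / 4) : ℝ) : ℂ) := by
    rw [crp_mul hq0]
    congr 2
    push_cast
    ring
  unfold whitTerm
  calc -((q ^ ((1:ℝ)/4) : ℝ) : ℂ) *
        (((q ^ (((n + 1 : ℕ) : ℝ) ^ 2 / 4) : ℝ) : ℂ) * X ^ (n+1) *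
            PbarA1 q (n+1) (((q ^ ((1:ℝ)/2) : ℝ) : ℂ) * Λ) / qfac q (n+1)
          - ((q ^ (((n + 1 : ℕ) : ℝ) ^ 2 / 4) : ℝ) : ℂ) * X ^ (n+1) *
            PbarA1 q (n+1) (((q ^ (-(1:ℝ)/2) : ℝ) : ℂ) * Λ) / qfac q (n+1))
      = ((q ^ (((n + 1 : ℕ) : ℝ) ^ 2 / 4) : ℝ) : ℂ) * X ^ (n+1) *
          (-((q ^ ((1:ℝ)/4) : ℝ) : ℂ) *
            (PbarA1 q (n+1) (((q ^ ((1:ℝ)/2) : ℝ) : ℂ) * Λ) / qfac q (n+1)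
              - PbarA1 q (n+1) (((q ^ (-(1:ℝ)/2) : ℝ) : ℂ) * Λ) / qfac q (n+1))) := by
        ring
    _ = ((q ^ (((n + 1 : ℕ) : ℝ) ^ 2 / 4) : ℝ) : ℂ) * X ^ (n+1) *
          (((q ^ ((-(2*(n:ℝ)) - 1)/4) : ℝ) : ℂ) * ((Λ - Λ⁻¹) * PbarA1 q n Λ / qfac q n)) := by
        rw [hk2]
    _ = (((q ^ (((n + 1 : ℕ) : ℝ) ^ 2 / 4) : ℝ) : ℂ) * ((q ^ ((-(2*(n:ℝ)) - 1)/4) : ℝ) : ℂ))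
          * X ^ (n+1) * ((Λ - Λ⁻¹) * PbarA1 q n Λ / qfac q n) := by
        ring
    _ = (Λ - Λ⁻¹) * (X * (((q ^ ((n : ℝ) ^ 2 / 4) : ℝ) : ℂ) * X ^ n * PbarA1 q n Λ / qfac q n)) := by
        rw [hqq]
        ring

end WhitAux

/-- the dual difference equation for the global q-Whittaker function. -/
theorem whitA1_dual_difference (q : ℝ) (hq0 : 0 < q) (hq1 : q < 1)
    (X Λ : ℂ) (hΛ : Λ ∉ ({0, 1, -1} : Set ℂ)) :
    -((q ^ ((1 : ℝ) / 4) : ℝ) : ℂ) *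
      (whitA1 q X (((q ^ ((1 : ℝ) / 2) : ℝ) : ℂ) * Λ) -
       whitA1 q X (((q ^ (-(1 : ℝ) / 2) : ℝ) : ℂ) * Λ)) / (Λ - Λ⁻¹) =
    X * whitA1 q X Λ := by
  classical
  simp only [Set.mem_insert_iff, Set.mem_singleton_iff, not_or] at hΛ
  obtain ⟨hΛ0, hΛ1, hΛm1⟩ := hΛ
  have hS : Λ - Λ⁻¹ ≠ 0 := by
    intro h
    have h' : Λ = Λ⁻¹ := sub_eq_zero.mp h
    have h2 : Λ * Λ = 1 := by
      calc Λ * Λ = Λ * Λ⁻¹ := by rw [← h']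
        _ = 1 := mul_inv_cancel₀ hΛ0
    have h3 : (Λ - 1) * (Λ + 1) = 0 := by linear_combination h2
    rcases mul_eq_zero.mp h3 with h4 | h4
    · exact hΛ1 (by linear_combination h4)
    · exact hΛm1 (by linear_combination h4)
  have ha0 : ((q ^ ((1:ℝ)/2) : ℝ) : ℂ) ≠ 0 := by
    exact_mod_cast ne_of_gt (Real.rpow_pos_of_pos hq0 _)
  have hb0 : ((q ^ (-(1:ℝ)/2) : ℝ) : ℂ) ≠ 0 := by
    exact_mod_cast ne_of_gt (Real.rpow_pos_of_pos hq0 _)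
  have hta : Summable (fun n => WhitAux.whitTerm q X (((q ^ ((1:ℝ)/2) : ℝ) : ℂ) * Λ) n) :=
    WhitAux.summable_whit hq0 hq1 X (mul_ne_zero ha0 hΛ0)
  have htb : Summable (fun n => WhitAux.whitTerm q X (((q ^ (-(1:ℝ)/2) : ℝ) : ℂ) * Λ) n) :=
    WhitAux.summable_whit hq0 hq1 X (mul_ne_zero hb0 hΛ0)
  have ht : Summable (fun n => WhitAux.whitTerm q X Λ n) :=
    WhitAux.summable_whit hq0 hq1 X hΛ0
  rw [div_eq_iff hS]
  rw [WhitAux.whitA1_eq, WhitAux.whitA1_eq, WhitAux.whitA1_eq]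
  rw [← Summable.tsum_sub hta htb, ← tsum_mul_left]
  have hf : Summable (fun n => -((q ^ ((1:ℝ)/4) : ℝ) : ℂ) *
      (WhitAux.whitTerm q X (((q ^ ((1:ℝ)/2) : ℝ) : ℂ) * Λ) n
        - WhitAux.whitTerm q X (((q ^ (-(1:ℝ)/2) : ℝ) : ℂ) * Λ) n)) :=
    (hta.sub htb).mul_left _
  rw [Summable.tsum_eq_zero_add hf]
  have h00 : -((q ^ ((1:ℝ)/4) : ℝ) : ℂ) *
      (WhitAux.whitTerm q X (((q ^ ((1:ℝ)/2) : ℝ) : ℂ) * Λ) 0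
        - WhitAux.whitTerm q X (((q ^ (-(1:ℝ)/2) : ℝ) : ℂ) * Λ) 0) = 0 := by
    unfold WhitAux.whitTerm
    rw [WhitAux.Pbar_zero, WhitAux.Pbar_zero]
    ring
  rw [h00, zero_add]
  have hstep := WhitAux.step (q := q) hq0 hq1 X hΛ0
  calc ∑' n : ℕ, -((q ^ ((1:ℝ)/4) : ℝ) : ℂ) *
        (WhitAux.whitTerm q X (((q ^ ((1:ℝ)/2) : ℝ) : ℂ) * Λ) (n + 1)
          - WhitAux.whitTerm q X (((q ^ (-(1:ℝ)/2) : ℝ) : ℂ) * Λ) (n + 1))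
      = ∑' n : ℕ, (Λ - Λ⁻¹) * (X * WhitAux.whitTerm q X Λ n) := tsum_congr hstep
    _ = (Λ - Λ⁻¹) * (X * ∑' n : ℕ, WhitAux.whitTerm q X Λ n) := by
        rw [tsum_mul_left, tsum_mul_left]
    _ = X * (∑' n : ℕ, WhitAux.whitTerm q X Λ n) * (Λ - Λ⁻¹) := by ring

end
end

section
/- Fix real numbers q and s with 0 < q < 1 and 0 < s < 1 and set t = s². For all X, Λ ∈ ℂ with X ≠ 0 and Λ ≠ 0, the series Ψ_t(X, Λ) = ∑_{n=0}^∞ sⁿ q^{n²/4} P_n(X; q, t) P_n(Λ; q, t) ∏_{i=0}^{n−1} ((1 − t qⁱ)(1 − t q^{i+1})) / ((1 − t² qⁱ)(1 − q^{i+1})) defining the global q,t-spherical function of type A₁ converges absolutely. (Theorem 3.1 of the paper in the rank-one case, equation (4.32).) -/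
open scoped BigOperators
open Filter

set_option maxHeartbeats 1000000

noncomputable section

-- norm of (1 - c * q^m) as complex, c real in [0,1]
lemma cast_fact (c q : ℝ) (m : ℕ) :
    (1 - (c : ℂ) * (q : ℂ) ^ m) = ((1 - c * q ^ m : ℝ) : ℂ) := by push_cast; ring

lemma lemA {c q : ℝ} (hc0 : 0 ≤ c) (hc1 : c ≤ 1) (hq0 : 0 ≤ q) (hq1 : q ≤ 1) (m : ℕ) :
    ‖1 - (c : ℂ) * (q : ℂ) ^ m‖ ≤ 1 := by
  rw [cast_fact, Complex.norm_real, Real.norm_eq_abs, abs_le]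
  have h1 : 0 ≤ c * q ^ m := mul_nonneg hc0 (pow_nonneg hq0 m)
  have h2 : c * q ^ m ≤ 1 := mul_le_one₀ hc1 (pow_nonneg hq0 m) (pow_le_one₀ hq0 hq1)
  constructor <;> linarith

lemma lemB {c q : ℝ} (hc0 : 0 ≤ c) (hq0 : 0 ≤ q) (hq1 : q ≤ 1) (m : ℕ) :
    1 - c ≤ ‖1 - (c : ℂ) * (q : ℂ) ^ m‖ := by
  rw [cast_fact, Complex.norm_real, Real.norm_eq_abs]
  have h2 : c * q ^ m ≤ c := by
    calc c * q ^ m ≤ c * 1 := by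
          exact mul_le_mul_of_nonneg_left (pow_le_one₀ hq0 hq1) hc0
      _ = c := mul_one c
  calc 1 - c ≤ 1 - c * q ^ m := by linarith
    _ ≤ |1 - c * q ^ m| := le_abs_self _

lemma Msym_norm_le {Y : ℂ} {r n : ℕ} (hrn : r ≤ n) :
    ‖Msym r Y‖ ≤ 2 * (‖Y‖ + ‖Y⁻¹‖ + 1) ^ n := by
  set R : ℝ := ‖Y‖ + ‖Y⁻¹‖ + 1 with hR
  have hR1 : 1 ≤ R := by rw [hR]; have := norm_nonneg Y; have := norm_nonneg Y⁻¹; linarith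
  have hRn : 1 ≤ R ^ n := one_le_pow₀ hR1
  unfold Msym
  split
  · simp only [norm_one]; nlinarith
  · calc ‖Y ^ r + Y⁻¹ ^ r‖ ≤ ‖Y ^ r‖ + ‖Y⁻¹ ^ r‖ := norm_add_le _ _
      _ = ‖Y‖ ^ r + ‖Y⁻¹‖ ^ r := by rw [norm_pow, norm_pow]
      _ ≤ R ^ r + R ^ r := by
          gcongr <;> [skip; skip] <;> rw [hR] <;> nlinarith [norm_nonneg Y, norm_nonneg Y⁻¹]
      _ = 2 * R ^ r := by ring
      _ ≤ 2 * R ^ n := by gcongr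

lemma Rogers_norm_le {q s : ℝ} (hq0 : 0 < q) (hq1 : q < 1) (hs0 : 0 < s) (hs1 : s < 1)
    (n : ℕ) (Y : ℂ) :
    ‖RogersA1 q ((s : ℂ) ^ 2) n Y‖ ≤
      2 * (n + 1) * (1 / ((1 - q) * (1 - s ^ 2))) ^ n * (‖Y‖ + ‖Y⁻¹‖ + 1) ^ n := by
  set R : ℝ := ‖Y‖ + ‖Y⁻¹‖ + 1 with hR
  set C : ℝ := 1 / ((1 - q) * (1 - s ^ 2)) with hC
  have hs2 : s ^ 2 < 1 := by nlinarith
  have hs2' : (0:ℝ) ≤ s ^ 2 := by positivity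
  have hden : 0 < (1 - q) * (1 - s ^ 2) := by nlinarith
  have hden1 : (1 - q) * (1 - s ^ 2) ≤ 1 := by nlinarith
  have hC1 : 1 ≤ C := one_le_one_div hden hden1
  have hCn : 1 ≤ C ^ n := one_le_pow₀ hC1
  have hR1 : 1 ≤ R := by rw [hR]; have := norm_nonneg Y; have := norm_nonneg Y⁻¹; linarith
  have hRn : 1 ≤ R ^ n := one_le_pow₀ hR1
  have hcast : ((s : ℂ)) ^ 2 = (((s ^ 2 : ℝ)) : ℂ) := by push_cast; ring
  have hfac : ∀ i : ℕ,
      ‖((1 - (q : ℂ) ^ (n - i)) * (1 - (s : ℂ) ^ 2 * (q : ℂ) ^ i)) /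
        ((1 - (q : ℂ) ^ (1 + i)) * (1 - (s : ℂ) ^ 2 * (q : ℂ) ^ (n - i - 1)))‖ ≤ C := by
    intro i
    rw [norm_div, norm_mul, norm_mul, hcast]
    have a1 : ‖1 - (q : ℂ) ^ (n - i)‖ ≤ 1 := by
      simpa using lemA (c := 1) (q := q) (by norm_num) (by norm_num) hq0.le hq1.le (n - i)
    have a2 : ‖1 - ((s ^ 2 : ℝ) : ℂ) * (q : ℂ) ^ i‖ ≤ 1 := lemA hs2' hs2.le hq0.le hq1.le i
    have b1 : 1 - q ≤ ‖1 - (q : ℂ) ^ (1 + i)‖ := by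
      have h := lemB (c := q) hq0.le hq0.le hq1.le i
      have : (1 : ℂ) - (q : ℂ) ^ (1 + i) = 1 - (q : ℂ) * (q : ℂ) ^ i := by
        rw [pow_add, pow_one]
      rw [this]; exact h
    have b2 : 1 - s ^ 2 ≤ ‖1 - ((s ^ 2 : ℝ) : ℂ) * (q : ℂ) ^ (n - i - 1)‖ :=
      lemB hs2' hq0.le hq1.le (n - i - 1)
    have hnum : ‖1 - (q : ℂ) ^ (n - i)‖ * ‖1 - ((s ^ 2 : ℝ) : ℂ) * (q : ℂ) ^ i‖ ≤ 1 :=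
      mul_le_one₀ a1 (norm_nonneg _) a2
    have hden2 : (1 - q) * (1 - s ^ 2) ≤
        ‖1 - (q : ℂ) ^ (1 + i)‖ * ‖1 - ((s ^ 2 : ℝ) : ℂ) * (q : ℂ) ^ (n - i - 1)‖ := by
      have := mul_le_mul b1 b2 (by nlinarith) (norm_nonneg _)
      linarith
    rw [hC]
    exact div_le_div₀ (by norm_num) hnum hden hden2
  have hcoef : ∀ j : ℕ, j ≤ n →
      ‖∏ i ∈ Finset.range j,
        ((1 - (q : ℂ) ^ (n - i)) * (1 - (s : ℂ) ^ 2 * (q : ℂ) ^ i)) /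
        ((1 - (q : ℂ) ^ (1 + i)) * (1 - (s : ℂ) ^ 2 * (q : ℂ) ^ (n - i - 1)))‖ ≤ C ^ n := by
    intro j hj
    rw [norm_prod]
    calc (∏ i ∈ Finset.range j, ‖((1 - (q : ℂ) ^ (n - i)) * (1 - (s : ℂ) ^ 2 * (q : ℂ) ^ i)) /
        ((1 - (q : ℂ) ^ (1 + i)) * (1 - (s : ℂ) ^ 2 * (q : ℂ) ^ (n - i - 1)))‖)
        ≤ ∏ i ∈ Finset.range j, C :=
          Finset.prod_le_prod (fun i _ => norm_nonneg _) (fun i _ => hfac i)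
      _ = C ^ j := by rw [Finset.prod_const, Finset.card_range]
      _ ≤ C ^ n := pow_le_pow_right₀ hC1 hj
  unfold RogersA1
  have hMn : ‖Msym n Y‖ ≤ 2 * R ^ n := Msym_norm_le le_rfl
  have hsum : ‖∑ j ∈ Finset.Icc 1 (n / 2),
      (∏ i ∈ Finset.range j,
        ((1 - (q : ℂ) ^ (n - i)) * (1 - (s : ℂ) ^ 2 * (q : ℂ) ^ i)) /
        ((1 - (q : ℂ) ^ (1 + i)) * (1 - (s : ℂ) ^ 2 * (q : ℂ) ^ (n - i - 1)))) *
      Msym (n - 2 * j) Y‖ ≤ (n / 2 : ℕ) * (C ^ n * (2 * R ^ n)) := by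
    calc ‖∑ j ∈ Finset.Icc 1 (n / 2), _‖ ≤ ∑ j ∈ Finset.Icc 1 (n / 2), ‖(∏ i ∈ Finset.range j,
          ((1 - (q : ℂ) ^ (n - i)) * (1 - (s : ℂ) ^ 2 * (q : ℂ) ^ i)) /
          ((1 - (q : ℂ) ^ (1 + i)) * (1 - (s : ℂ) ^ 2 * (q : ℂ) ^ (n - i - 1)))) *
          Msym (n - 2 * j) Y‖ := norm_sum_le _ _
      _ ≤ ∑ j ∈ Finset.Icc 1 (n / 2), C ^ n * (2 * R ^ n) := by
          apply Finset.sum_le_sum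
          intro j hj
          rw [norm_mul]
          have hj' : j ≤ n := le_trans (Finset.mem_Icc.1 hj).2 (Nat.div_le_self n 2)
          exact mul_le_mul (hcoef j hj') (Msym_norm_le (Nat.sub_le n (2 * j)))
            (norm_nonneg _) (le_trans (by norm_num) hCn)
      _ = (Finset.Icc 1 (n / 2)).card * (C ^ n * (2 * R ^ n)) := by
          rw [Finset.sum_const, nsmul_eq_mul]
      _ = (n / 2 : ℕ) * (C ^ n * (2 * R ^ n)) := by simp
  calc ‖Msym n Y + _‖ ≤ ‖Msym n Y‖ + _ := norm_add_le _ _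
    _ ≤ 2 * R ^ n + (n / 2 : ℕ) * (C ^ n * (2 * R ^ n)) := add_le_add hMn hsum
    _ ≤ 2 * (n + 1) * C ^ n * R ^ n := by
        have h1 : ((n / 2 : ℕ) : ℝ) ≤ (n : ℝ) := by
          exact_mod_cast Nat.div_le_self n 2
        have h2 : (0:ℝ) ≤ R ^ n := by positivity
        nlinarith [mul_le_mul_of_nonneg_right hCn h2]

lemma comb_eq (a Q c b d e : ℝ) (m : ℕ) :
    a ^ m * Q * (2 * ((m : ℝ) + 1) * c ^ m * b ^ m) * (2 * ((m : ℝ) + 1) * c ^ m * d ^ m) *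
      e ^ m = Q * (4 * ((m : ℝ) + 1) ^ 2 * (a * c ^ 2 * b * d * e) ^ m) := by
  rw [mul_pow, mul_pow, mul_pow, mul_pow]; ring

/-- absolute convergence of the global q,t-spherical series of type A₁. -/
theorem sphA1_series_abs_convergent (q s : ℝ) (hq0 : 0 < q) (hq1 : q < 1)
    (hs0 : 0 < s) (hs1 : s < 1) (X Λ : ℂ) (hX : X ≠ 0) (hΛ : Λ ≠ 0) :
    Summable (fun n : ℕ =>
      ‖(s : ℂ) ^ n * ((q ^ ((n : ℝ) ^ 2 / 4) : ℝ) : ℂ) *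
        RogersA1 q ((s : ℂ) ^ 2) n X * RogersA1 q ((s : ℂ) ^ 2) n Λ *
        ∏ i ∈ Finset.range n,
          ((1 - (s : ℂ) ^ 2 * (q : ℂ) ^ i) * (1 - (s : ℂ) ^ 2 * (q : ℂ) ^ (i + 1))) /
          ((1 - ((s : ℂ) ^ 2) ^ 2 * (q : ℂ) ^ i) * (1 - (q : ℂ) ^ (i + 1)))‖) := by
  set RX : ℝ := ‖X‖ + ‖X⁻¹‖ + 1 with hRX
  set RL : ℝ := ‖Λ‖ + ‖Λ⁻¹‖ + 1 with hRL
  set C : ℝ := 1 / ((1 - q) * (1 - s ^ 2)) with hC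
  set D : ℝ := 1 / ((1 - s ^ 4) * (1 - q)) with hD
  have hs2 : s ^ 2 < 1 := by nlinarith
  have hs2' : (0:ℝ) ≤ s ^ 2 := by positivity
  have hs4 : s ^ 4 < 1 := by nlinarith
  have hs4' : (0:ℝ) ≤ s ^ 4 := by positivity
  have hRX1 : 1 ≤ RX := by rw [hRX]; have := norm_nonneg X; have := norm_nonneg X⁻¹; linarith
  have hRL1 : 1 ≤ RL := by rw [hRL]; have := norm_nonneg Λ; have := norm_nonneg Λ⁻¹; linarith
  have hCden : 0 < (1 - q) * (1 - s ^ 2) := by nlinarith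
  have hC0 : 0 < C := by rw [hC]; positivity
  have hDden : 0 < (1 - s ^ 4) * (1 - q) := by nlinarith
  have hD0 : 0 < D := by rw [hD]; positivity
  -- bound on the product factor
  have hcast2 : ((s : ℂ)) ^ 2 = (((s ^ 2 : ℝ)) : ℂ) := by push_cast; ring
  have hcast4 : (((s : ℂ)) ^ 2) ^ 2 = (((s ^ 4 : ℝ)) : ℂ) := by push_cast; ring
  have hprod : ∀ n : ℕ,
      ‖∏ i ∈ Finset.range n,
        ((1 - (s : ℂ) ^ 2 * (q : ℂ) ^ i) * (1 - (s : ℂ) ^ 2 * (q : ℂ) ^ (i + 1))) /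
        ((1 - ((s : ℂ) ^ 2) ^ 2 * (q : ℂ) ^ i) * (1 - (q : ℂ) ^ (i + 1)))‖ ≤ D ^ n := by
    intro n
    rw [norm_prod]
    calc (∏ i ∈ Finset.range n, ‖((1 - (s : ℂ) ^ 2 * (q : ℂ) ^ i) * (1 - (s : ℂ) ^ 2 * (q : ℂ) ^ (i + 1))) /
        ((1 - ((s : ℂ) ^ 2) ^ 2 * (q : ℂ) ^ i) * (1 - (q : ℂ) ^ (i + 1)))‖)
        ≤ ∏ i ∈ Finset.range n, D := by
          apply Finset.prod_le_prod (fun i _ => norm_nonneg _)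
          intro i _
          rw [norm_div, norm_mul, norm_mul, hcast4, hcast2]
          have a1 : ‖1 - ((s ^ 2 : ℝ) : ℂ) * (q : ℂ) ^ i‖ ≤ 1 := lemA hs2' hs2.le hq0.le hq1.le i
          have a2 : ‖1 - ((s ^ 2 : ℝ) : ℂ) * (q : ℂ) ^ (i + 1)‖ ≤ 1 :=
            lemA hs2' hs2.le hq0.le hq1.le (i + 1)
          have b1 : 1 - s ^ 4 ≤ ‖1 - ((s ^ 4 : ℝ) : ℂ) * (q : ℂ) ^ i‖ :=
            lemB hs4' hq0.le hq1.le i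
          have b2 : 1 - q ≤ ‖1 - (q : ℂ) ^ (i + 1)‖ := by
            have h := lemB (c := q) hq0.le hq0.le hq1.le i
            have he : (1 : ℂ) - (q : ℂ) ^ (i + 1) = 1 - (q : ℂ) * (q : ℂ) ^ i := by
              rw [pow_succ]; ring
            rw [he]; exact h
          have hnum : ‖1 - ((s ^ 2 : ℝ) : ℂ) * (q : ℂ) ^ i‖ *
              ‖1 - ((s ^ 2 : ℝ) : ℂ) * (q : ℂ) ^ (i + 1)‖ ≤ 1 :=
            mul_le_one₀ a1 (norm_nonneg _) a2
          have hden2 : (1 - s ^ 4) * (1 - q) ≤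
              ‖1 - ((s ^ 4 : ℝ) : ℂ) * (q : ℂ) ^ i‖ * ‖1 - (q : ℂ) ^ (i + 1)‖ := by
            have := mul_le_mul b1 b2 (by nlinarith) (norm_nonneg _)
            linarith
          rw [hD]
          exact div_le_div₀ (by norm_num) hnum hDden hden2
      _ = D ^ n := by rw [Finset.prod_const, Finset.card_range]
  -- combined bound on the n-th term
  set B : ℝ := s * C ^ 2 * RX * RL * D with hB
  have hB0 : 0 < B := by rw [hB]; positivity
  have hterm : ∀ n : ℕ,
      ‖(s : ℂ) ^ n * ((q ^ ((n : ℝ) ^ 2 / 4) : ℝ) : ℂ) *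
        RogersA1 q ((s : ℂ) ^ 2) n X * RogersA1 q ((s : ℂ) ^ 2) n Λ *
        ∏ i ∈ Finset.range n,
          ((1 - (s : ℂ) ^ 2 * (q : ℂ) ^ i) * (1 - (s : ℂ) ^ 2 * (q : ℂ) ^ (i + 1))) /
          ((1 - ((s : ℂ) ^ 2) ^ 2 * (q : ℂ) ^ i) * (1 - (q : ℂ) ^ (i + 1)))‖ ≤
        q ^ ((n : ℝ) ^ 2 / 4) * (4 * ((n : ℝ) + 1) ^ 2 * B ^ n) := by
    intro n
    have hq4 : (0:ℝ) < q ^ ((n : ℝ) ^ 2 / 4) := Real.rpow_pos_of_pos hq0 _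
    rw [norm_mul, norm_mul, norm_mul, norm_mul, norm_pow, Complex.norm_real, Complex.norm_real,
      Real.norm_eq_abs, Real.norm_eq_abs, abs_of_pos hs0, abs_of_pos hq4]
    have h1 := Rogers_norm_le hq0 hq1 hs0 hs1 n X
    have h2 := Rogers_norm_le hq0 hq1 hs0 hs1 n Λ
    have h3 := hprod n
    rw [← hC] at h1 h2
    rw [← hRL] at h2
    calc s ^ n * q ^ ((n : ℝ) ^ 2 / 4) * ‖RogersA1 q ((s : ℂ) ^ 2) n X‖ *
          ‖RogersA1 q ((s : ℂ) ^ 2) n Λ‖ * ‖∏ i ∈ Finset.range n,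
          ((1 - (s : ℂ) ^ 2 * (q : ℂ) ^ i) * (1 - (s : ℂ) ^ 2 * (q : ℂ) ^ (i + 1))) /
          ((1 - ((s : ℂ) ^ 2) ^ 2 * (q : ℂ) ^ i) * (1 - (q : ℂ) ^ (i + 1)))‖
        ≤ s ^ n * q ^ ((n : ℝ) ^ 2 / 4) * (2 * (n + 1) * C ^ n * RX ^ n) *
          (2 * (n + 1) * C ^ n * RL ^ n) * D ^ n := by
          gcongr <;> positivity
      _ = q ^ ((n : ℝ) ^ 2 / 4) * (4 * ((n : ℝ) + 1) ^ 2 * B ^ n) := by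
          rw [hB]; exact comb_eq s _ C RX RL D n
  -- the comparison series
  set u : ℝ := q ^ ((1 : ℝ) / 4) with hu
  have hu0 : 0 < u := Real.rpow_pos_of_pos hq0 _
  have hu1 : u < 1 := Real.rpow_lt_one hq0.le hq1 (by norm_num)
  have hqp : ∀ n : ℕ, q ^ ((n : ℝ) ^ 2 / 4) = (u ^ n) ^ n := by
    intro n
    have he : (n : ℝ) ^ 2 / 4 = ((1 : ℝ) / 4 * n) * n := by ring
    rw [he, Real.rpow_mul hq0.le, Real.rpow_mul hq0.le, Real.rpow_natCast, Real.rpow_natCast]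
  obtain ⟨N, hN⟩ : ∃ N : ℕ, u ^ N * B < 1 / 2 := by
    have h := (tendsto_pow_atTop_nhds_zero_of_lt_one hu0.le hu1).mul_const B
    rw [zero_mul] at h
    exact (h.eventually (gt_mem_nhds (by norm_num : (0:ℝ) < 1/2))).exists
  have hsumg : Summable (fun n : ℕ => 4 * ((n : ℝ) + 1) ^ 2 * (1 / 2 : ℝ) ^ n) := by
    have k2 := summable_pow_mul_geometric_of_norm_lt_one (R := ℝ) 2
      (r := (1/2 : ℝ)) (by rw [Real.norm_eq_abs, abs_of_nonneg (by norm_num : (0:ℝ) ≤ 1/2)]; norm_num)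
    have k1 := summable_pow_mul_geometric_of_norm_lt_one (R := ℝ) 1
      (r := (1/2 : ℝ)) (by rw [Real.norm_eq_abs, abs_of_nonneg (by norm_num : (0:ℝ) ≤ 1/2)]; norm_num)
    have k0 := summable_geometric_of_lt_one (by norm_num : (0:ℝ) ≤ 1/2) (by norm_num)
    exact ((k2.mul_left 4).add ((k1.mul_left 8).add (k0.mul_left 4))).congr
      (fun n => by push_cast; ring)
  apply Summable.of_norm_bounded_eventually hsumg
  rw [Nat.cofinite_eq_atTop]
  filter_upwards [eventually_ge_atTop N] with n hn
  rw [norm_norm]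
  refine le_trans (hterm n) ?_
  have hkey : q ^ ((n : ℝ) ^ 2 / 4) * B ^ n ≤ (1 / 2 : ℝ) ^ n := by
    rw [hqp n, ← mul_pow]
    have h1 : u ^ n ≤ u ^ N := pow_le_pow_of_le_one hu0.le hu1.le hn
    have h2 : u ^ n * B ≤ 1 / 2 := le_trans (by nlinarith [pow_pos hu0 n]) hN.le
    exact pow_le_pow_left₀ (by positivity) h2 n
  calc q ^ ((n : ℝ) ^ 2 / 4) * (4 * ((n : ℝ) + 1) ^ 2 * B ^ n)
      = 4 * ((n : ℝ) + 1) ^ 2 * (q ^ ((n : ℝ) ^ 2 / 4) * B ^ n) := by ring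
    _ ≤ 4 * ((n : ℝ) + 1) ^ 2 * (1 / 2 : ℝ) ^ n := by
        have : (0:ℝ) ≤ 4 * ((n : ℝ) + 1) ^ 2 := by positivity
        nlinarith [hkey]

end
end

section
/- Fix a real number q with 0 < q < 1. For all X, Λ ∈ ℂ with X ≠ 0 and Λ ≠ 0, the Whittaker limit of the global q,t-spherical function of type A₁ exists and equals the global q-Whittaker function: lim_{s → 0⁺} Ψ_{s²}(X/s, Λ) = Ψ̃(X, Λ), where for each 0 < s < 1 one takes t = s². (The existence of the Whittaker limit, equation (3.19), and Theorem 3.2(i) of the paper in the rank-one case.) -/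
open scoped BigOperators
open Filter

noncomputable section

section Helpers
open Topology


lemma norm_one_sub_real (x : ℝ) : ‖(1 : ℂ) - (x:ℂ)‖ = |1 - x| := by
  rw [show (1:ℂ) - (x:ℂ) = ((1 - x : ℝ) : ℂ) by push_cast; ring, Complex.norm_real]
  exact Real.norm_eq_abs _

lemma one_sub_cpow_ne {q : ℝ} (hq0 : 0 < q) (hq1 : q < 1) {k : ℕ} (hk : 1 ≤ k) :
    (1 : ℂ) - (q:ℂ) ^ k ≠ 0 := by
  have h1 : q ^ k < 1 := pow_lt_one₀ hq0.le hq1 (by omega)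
  have : (1:ℂ) - (q:ℂ)^k = ((1 - q^k : ℝ) : ℂ) := by push_cast; ring
  rw [this]
  exact_mod_cast (by linarith : (1 - q^k : ℝ) ≠ 0)

lemma prod_Icc_one_eq (f : ℕ → ℂ) (n : ℕ) :
    ∏ j ∈ Finset.Icc 1 n, f j = ∏ i ∈ Finset.range n, f (i+1) := by
  induction n with
  | zero => simp
  | succ n ih =>
      rw [Finset.prod_Icc_succ_top (by omega), Finset.prod_range_succ, ih]

lemma keyMsym {s X : ℂ} (hs : s ≠ 0) (hX : X ≠ 0) {r n : ℕ} (hr : r ≤ n) :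
    s ^ n * Msym r (X / s) =
      if r = 0 then s ^ n else s ^ (n - r) * X ^ r + s ^ (n + r) * X⁻¹ ^ r := by
  rcases Nat.eq_zero_or_pos r with h | h
  · simp [Msym, h]
  obtain ⟨m, rfl⟩ : ∃ m, n = m + r := ⟨n - r, (Nat.sub_add_cancel hr).symm⟩
  have hr0 : r ≠ 0 := by omega
  simp only [Msym, if_neg hr0, Nat.add_sub_cancel]
  field_simp
  have hsr : s ^ r * s⁻¹ ^ r = 1 := by rw [← mul_pow, mul_inv_cancel₀ hs, one_pow]
  linear_combination (s ^ m * X ^ r) * hsr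

lemma norm_Msym_le (Y : ℂ) {r n : ℕ} (hr : r ≤ n) :
    ‖Msym r Y‖ ≤ 2 * (max (max ‖Y‖ ‖Y⁻¹‖) 1) ^ n := by
  set C := max (max ‖Y‖ ‖Y⁻¹‖) 1 with hC
  have hC1 : (1:ℝ) ≤ C := le_max_right _ _
  have hCn : (1:ℝ) ≤ C ^ n := one_le_pow₀ hC1
  rcases Nat.eq_zero_or_pos r with h | h
  · simp [Msym, h]; linarith
  have hr0 : r ≠ 0 := by omega
  have h1 : ‖Y‖ ^ r ≤ C ^ n :=
    le_trans (pow_le_pow_left₀ (norm_nonneg _) (le_trans (le_max_left _ _) (le_max_left _ _)) r)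
      (pow_le_pow_right₀ hC1 hr)
  have h2 : ‖Y⁻¹‖ ^ r ≤ C ^ n :=
    le_trans (pow_le_pow_left₀ (norm_nonneg _) (le_trans (le_max_right _ _) (le_max_left _ _)) r)
      (pow_le_pow_right₀ hC1 hr)
  calc ‖Msym r Y‖ = ‖Y ^ r + Y⁻¹ ^ r‖ := by rw [Msym, if_neg hr0]
    _ ≤ ‖Y‖ ^ r + ‖Y⁻¹‖ ^ r := by
        refine le_trans (norm_add_le _ _) ?_
        simp [norm_pow]
    _ ≤ 2 * C ^ n := by linarith

lemma tendsto_rogers (q : ℝ) (hq0 : 0 < q) (hq1 : q < 1) (n : ℕ) (Λ : ℂ) :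
    Tendsto (fun t : ℂ => RogersA1 q t n Λ) (𝓝 0) (𝓝 (PbarA1 q n Λ)) := by
  have H : Tendsto (fun t : ℂ => RogersA1 q t n Λ) (𝓝 0)
      (𝓝 (Msym n Λ + ∑ j ∈ Finset.Icc 1 (n / 2),
        (∏ i ∈ Finset.range j,
          ((1 - (q : ℂ) ^ (n - i)) * (1 - 0 * (q : ℂ) ^ i)) /
          ((1 - (q : ℂ) ^ (1 + i)) * (1 - 0 * (q : ℂ) ^ (n - i - 1)))) *
        Msym (n - 2 * j) Λ)) := by
    unfold RogersA1
    refine Tendsto.add tendsto_const_nhds (tendsto_finset_sum _ fun j hj => ?_)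
    refine Tendsto.mul (tendsto_finset_prod _ fun i hi => ?_) tendsto_const_nhds
    refine Tendsto.div
      (Tendsto.mul tendsto_const_nhds
        (tendsto_const_nhds.sub (tendsto_id.mul tendsto_const_nhds)))
      (Tendsto.mul tendsto_const_nhds
        (tendsto_const_nhds.sub (tendsto_id.mul tendsto_const_nhds))) ?_
    simpa using one_sub_cpow_ne hq0 hq1 (by omega : 1 ≤ 1 + i)
  have he : (Msym n Λ + ∑ j ∈ Finset.Icc 1 (n / 2),
        (∏ i ∈ Finset.range j,
          ((1 - (q : ℂ) ^ (n - i)) * (1 - 0 * (q : ℂ) ^ i)) /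
          ((1 - (q : ℂ) ^ (1 + i)) * (1 - 0 * (q : ℂ) ^ (n - i - 1)))) *
        Msym (n - 2 * j) Λ) = PbarA1 q n Λ := by
    unfold PbarA1
    congr 1
    refine Finset.sum_congr rfl fun j hj => ?_
    congr 1
    refine Finset.prod_congr rfl fun i hi => ?_
    rw [Nat.add_comm 1 i]
    simp
  rwa [he] at H

lemma tendsto_coeff (q : ℝ) (hq0 : 0 < q) (hq1 : q < 1) (n j : ℕ) :
    Tendsto (fun t : ℂ => ∏ i ∈ Finset.range j,
        ((1 - (q:ℂ)^(n-i)) * (1 - t*(q:ℂ)^i)) /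
        ((1 - (q:ℂ)^(1+i)) * (1 - t*(q:ℂ)^(n-i-1)))) (𝓝 0)
      (𝓝 (∏ i ∈ Finset.range j,
        ((1 - (q:ℂ)^(n-i)) * (1 - 0*(q:ℂ)^i)) /
        ((1 - (q:ℂ)^(1+i)) * (1 - 0*(q:ℂ)^(n-i-1))))) := by
  refine tendsto_finset_prod _ fun i hi => ?_
  refine Tendsto.div
    (Tendsto.mul tendsto_const_nhds
      (tendsto_const_nhds.sub (tendsto_id.mul tendsto_const_nhds)))
    (Tendsto.mul tendsto_const_nhds
      (tendsto_const_nhds.sub (tendsto_id.mul tendsto_const_nhds))) ?_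
  simpa using one_sub_cpow_ne hq0 hq1 (by omega : 1 ≤ 1 + i)

lemma tendsto_sq : Tendsto (fun s : ℝ => (s:ℂ)^2)
    (𝓝[Set.Ioo (0:ℝ) 1] 0) (𝓝 0) := by
  have h := ((Complex.continuous_ofReal.pow 2).tendsto 0).mono_left
    (nhdsWithin_le_nhds (s := Set.Ioo (0:ℝ) 1))
  convert h using 2 <;> simp

lemma tendsto_pow_zero {k : ℕ} (hk : 1 ≤ k) : Tendsto (fun s : ℝ => (s:ℂ)^k)
    (𝓝[Set.Ioo (0:ℝ) 1] 0) (𝓝 0) := by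
  have h := ((Complex.continuous_ofReal.pow k).tendsto 0).mono_left
    (nhdsWithin_le_nhds (s := Set.Ioo (0:ℝ) 1))
  convert h using 2 <;> simp [zero_pow (by omega : k ≠ 0)]

lemma tendsto_sn_rogers (q : ℝ) (hq0 : 0 < q) (hq1 : q < 1) (X : ℂ) (hX : X ≠ 0) (n : ℕ) :
    Tendsto (fun s : ℝ => (s:ℂ)^n * RogersA1 q ((s:ℂ)^2) n (X / (s:ℂ)))
      (𝓝[Set.Ioo (0:ℝ) 1] 0) (𝓝 (X ^ n)) := by
  rcases Nat.eq_zero_or_pos n with hn | hn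
  · subst hn
    simp only [RogersA1, Msym, pow_zero, one_mul]
    simpa using tendsto_const_nhds (α := ℝ)
  have hn0 : n ≠ 0 := by omega
  set F := 𝓝[Set.Ioo (0:ℝ) 1] (0:ℝ)
  -- the explicit expansion
  set g : ℝ → ℂ := fun s =>
    ((s:ℂ)^(n-n) * X^n + (s:ℂ)^(n+n) * X⁻¹^n) + ∑ j ∈ Finset.Icc 1 (n / 2),
      (∏ i ∈ Finset.range j,
        ((1 - (q:ℂ)^(n-i)) * (1 - (s:ℂ)^2*(q:ℂ)^i)) /
        ((1 - (q:ℂ)^(1+i)) * (1 - (s:ℂ)^2*(q:ℂ)^(n-i-1)))) *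
      (if n - 2*j = 0 then (s:ℂ)^n
        else (s:ℂ)^(n-(n-2*j)) * X^(n-2*j) + (s:ℂ)^(n+(n-2*j)) * X⁻¹^(n-2*j)) with hg
  have heq : ∀ᶠ s : ℝ in F, (s:ℂ)^n * RogersA1 q ((s:ℂ)^2) n (X / (s:ℂ)) = g s := by
    filter_upwards [self_mem_nhdsWithin] with s hs
    have hs0 : (s:ℂ) ≠ 0 := by
      simpa using ne_of_gt hs.1
    rw [RogersA1, mul_add, Finset.mul_sum, hg]
    congr 1
    · rw [keyMsym hs0 hX le_rfl, if_neg hn0]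
    · refine Finset.sum_congr rfl fun j hj => ?_
      rw [mul_left_comm, keyMsym hs0 hX (Nat.sub_le n (2*j))]
  refine Tendsto.congr' (Filter.EventuallyEq.symm heq) ?_
  have h1 : Tendsto (fun s : ℝ => (s:ℂ)^(n-n) * X^n + (s:ℂ)^(n+n) * X⁻¹^n) F (𝓝 (X^n)) := by
    rw [Nat.sub_self]
    simpa only [pow_zero, one_mul, zero_mul, add_zero] using
      (tendsto_const_nhds (x := X^n) (f := 𝓝[Set.Ioo (0:ℝ) 1] 0)).add
      ((tendsto_pow_zero (by omega : 1 ≤ n + n)).mul (tendsto_const_nhds (x := X⁻¹^n)))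
  have h2 : Tendsto (fun s : ℝ => ∑ j ∈ Finset.Icc 1 (n / 2),
      (∏ i ∈ Finset.range j,
        ((1 - (q:ℂ)^(n-i)) * (1 - (s:ℂ)^2*(q:ℂ)^i)) /
        ((1 - (q:ℂ)^(1+i)) * (1 - (s:ℂ)^2*(q:ℂ)^(n-i-1)))) *
      (if n - 2*j = 0 then (s:ℂ)^n
        else (s:ℂ)^(n-(n-2*j)) * X^(n-2*j) + (s:ℂ)^(n+(n-2*j)) * X⁻¹^(n-2*j))) F (𝓝 0) := by
    have := tendsto_finset_sum (f := fun j (s:ℝ) =>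
      (∏ i ∈ Finset.range j,
        ((1 - (q:ℂ)^(n-i)) * (1 - (s:ℂ)^2*(q:ℂ)^i)) /
        ((1 - (q:ℂ)^(1+i)) * (1 - (s:ℂ)^2*(q:ℂ)^(n-i-1)))) *
      (if n - 2*j = 0 then (s:ℂ)^n
        else (s:ℂ)^(n-(n-2*j)) * X^(n-2*j) + (s:ℂ)^(n+(n-2*j)) * X⁻¹^(n-2*j)))
      (a := fun _ => (0:ℂ)) (x := F) (Finset.Icc 1 (n / 2)) ?_
    · simpa only [Finset.sum_const_zero] using this
    intro j hj
    simp only [Finset.mem_Icc] at hj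
    have hcoef := (tendsto_coeff q hq0 hq1 n j).comp tendsto_sq
    have hD : Tendsto (fun s : ℝ => (if n - 2*j = 0 then (s:ℂ)^n
        else (s:ℂ)^(n-(n-2*j)) * X^(n-2*j) + (s:ℂ)^(n+(n-2*j)) * X⁻¹^(n-2*j))) F (𝓝 0) := by
      rcases Nat.eq_zero_or_pos (n - 2*j) with h | h
      · simp only [h, if_pos rfl]
        exact tendsto_pow_zero hn
      · simp only [if_neg (by omega : ¬ n - 2*j = 0)]
        have e1 := (tendsto_pow_zero (by omega : 1 ≤ n-(n-2*j))).mul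
          (tendsto_const_nhds (x := X^(n-2*j)))
        have e2 := (tendsto_pow_zero (by omega : 1 ≤ n+(n-2*j))).mul
          (tendsto_const_nhds (x := X⁻¹^(n-2*j)))
        simpa only [zero_mul, add_zero] using e1.add e2
    simpa only [mul_zero, Function.comp_def] using hcoef.mul hD
  simpa only [add_zero] using h1.add h2

lemma tendsto_prodfac (q : ℝ) (hq0 : 0 < q) (hq1 : q < 1) (n : ℕ) :
    Tendsto (fun s : ℝ => ∏ i ∈ Finset.range n,
        ((1 - (s:ℂ)^2*(q:ℂ)^i) * (1 - (s:ℂ)^2*(q:ℂ)^(i+1))) /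
        ((1 - ((s:ℂ)^2)^2*(q:ℂ)^i) * (1 - (q:ℂ)^(i+1))))
      (𝓝[Set.Ioo (0:ℝ) 1] 0)
      (𝓝 ((∏ j ∈ Finset.Icc 1 n, (1 - (q:ℂ)^j))⁻¹)) := by
  have H : Tendsto (fun s : ℝ => ∏ i ∈ Finset.range n,
        ((1 - (s:ℂ)^2*(q:ℂ)^i) * (1 - (s:ℂ)^2*(q:ℂ)^(i+1))) /
        ((1 - ((s:ℂ)^2)^2*(q:ℂ)^i) * (1 - (q:ℂ)^(i+1))))
      (𝓝[Set.Ioo (0:ℝ) 1] 0)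
      (𝓝 (∏ i ∈ Finset.range n,
        ((1 - (0:ℂ)*(q:ℂ)^i) * (1 - (0:ℂ)*(q:ℂ)^(i+1))) /
        ((1 - ((0:ℂ))^2*(q:ℂ)^i) * (1 - (q:ℂ)^(i+1))))) := by
    refine tendsto_finset_prod _ fun i hi => ?_
    refine Tendsto.div
      ((tendsto_const_nhds.sub (tendsto_sq.mul tendsto_const_nhds)).mul
        (tendsto_const_nhds.sub (tendsto_sq.mul tendsto_const_nhds)))
      ((tendsto_const_nhds.sub ((tendsto_sq.pow 2).mul tendsto_const_nhds)).mul
        tendsto_const_nhds) ?_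
    simpa using one_sub_cpow_ne hq0 hq1 (by omega : 1 ≤ i + 1)
  have he : (∏ i ∈ Finset.range n,
        ((1 - (0:ℂ)*(q:ℂ)^i) * (1 - (0:ℂ)*(q:ℂ)^(i+1))) /
        ((1 - ((0:ℂ))^2*(q:ℂ)^i) * (1 - (q:ℂ)^(i+1))))
      = (∏ j ∈ Finset.Icc 1 n, (1 - (q:ℂ)^j))⁻¹ := by
    rw [prod_Icc_one_eq (fun j => 1 - (q:ℂ)^j) n, ← Finset.prod_inv_distrib]
    refine Finset.prod_congr rfl fun i hi => ?_
    norm_num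
  rwa [he] at H

lemma tendsto_term (q : ℝ) (hq0 : 0 < q) (hq1 : q < 1) (X Λ : ℂ) (hX : X ≠ 0) (n : ℕ) :
    Tendsto (fun s : ℝ => (s:ℂ)^n * ((q ^ ((n:ℝ)^2/4) : ℝ) : ℂ) *
        RogersA1 q ((s:ℂ)^2) n (X/(s:ℂ)) * RogersA1 q ((s:ℂ)^2) n Λ *
        ∏ i ∈ Finset.range n,
          ((1 - (s:ℂ)^2*(q:ℂ)^i) * (1 - (s:ℂ)^2*(q:ℂ)^(i+1))) /
          ((1 - ((s:ℂ)^2)^2*(q:ℂ)^i) * (1 - (q:ℂ)^(i+1))))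
      (𝓝[Set.Ioo (0:ℝ) 1] 0)
      (𝓝 (((q ^ ((n:ℝ)^2/4) : ℝ) : ℂ) * X^n * PbarA1 q n Λ /
        ∏ j ∈ Finset.Icc 1 n, (1 - (q:ℂ)^j))) := by
  have hΛ := (tendsto_rogers q hq0 hq1 n Λ).comp tendsto_sq
  have H := (((tendsto_sn_rogers q hq0 hq1 X hX n).mul hΛ).mul
    (tendsto_prodfac q hq0 hq1 n)).const_mul (((q ^ ((n:ℝ)^2/4) : ℝ) : ℂ))
  rw [show (((q ^ ((n:ℝ)^2/4) : ℝ) : ℂ) * X^n * PbarA1 q n Λ /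
        ∏ j ∈ Finset.Icc 1 n, (1 - (q:ℂ)^j))
      = (((q ^ ((n:ℝ)^2/4) : ℝ) : ℂ) * ((X^n * PbarA1 q n Λ) *
        (∏ j ∈ Finset.Icc 1 n, (1 - (q:ℂ)^j))⁻¹)) by rw [div_eq_mul_inv]; ring]
  refine Tendsto.congr (fun s => ?_) H
  simp only [Function.comp_def]
  ring

lemma norm_factor_le {q : ℝ} (hq0 : 0 < q) (hq1 : q < 1) {a b c d : ℝ}
    (ha : 0 ≤ a) (ha1 : a ≤ 1) (hb : 0 ≤ b) (hb1 : b ≤ 1)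
    (hc : 0 ≤ c) (hcq : c ≤ q) (hd : 0 ≤ d) (hd1 : d ≤ 1/4) :
    ‖((1 - (a:ℂ)) * (1 - (b:ℂ))) / ((1 - (c:ℂ)) * (1 - (d:ℂ)))‖
      ≤ 4/(3*(1-q)) + 1 := by
  rw [norm_div, norm_mul, norm_mul, norm_one_sub_real, norm_one_sub_real,
    norm_one_sub_real, norm_one_sub_real, abs_of_nonneg (by linarith),
    abs_of_nonneg (by linarith), abs_of_nonneg (by linarith),
    abs_of_nonneg (by linarith : (0:ℝ) ≤ 1 - d)]
  have hq' : (0:ℝ) < 1 - q := by linarith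
  have hden : (0:ℝ) < (1-c)*(1-d) := mul_pos (by linarith) (by linarith)
  rw [div_le_iff₀ hden]
  have hk : 4/(3*(1-q)) * ((1-q)*(3/4)) = 1 := by field_simp
  have hkpos : (0:ℝ) < 4/(3*(1-q)) := div_pos (by norm_num) (by linarith)
  have hge : (1-q)*(3/4) ≤ (1-c)*(1-d) := by nlinarith
  have h2 : (1:ℝ) ≤ 4/(3*(1-q)) * ((1-c)*(1-d)) := by
    calc (1:ℝ) = 4/(3*(1-q)) * ((1-q)*(3/4)) := hk.symm
      _ ≤ 4/(3*(1-q)) * ((1-c)*(1-d)) := by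
          exact mul_le_mul_of_nonneg_left hge hkpos.le
  nlinarith

lemma norm_coeff_le {q : ℝ} (hq0 : 0 < q) (hq1 : q < 1) {s : ℝ}
    (hs : s ∈ Set.Ioo (0:ℝ) (1/2)) (n : ℕ) {j : ℕ} (hj : j ≤ n) :
    ‖∏ i ∈ Finset.range j,
        ((1 - (q:ℂ)^(n-i)) * (1 - (s:ℂ)^2*(q:ℂ)^i)) /
        ((1 - (q:ℂ)^(1+i)) * (1 - (s:ℂ)^2*(q:ℂ)^(n-i-1)))‖
      ≤ (4/(3*(1-q)) + 1)^n := by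
  have hK1 : (1:ℝ) ≤ 4/(3*(1-q)) + 1 := by
    have : (0:ℝ) < 4/(3*(1-q)) := div_pos (by norm_num) (by linarith)
    linarith
  rw [norm_prod]
  calc ∏ i ∈ Finset.range j, ‖((1 - (q:ℂ)^(n-i)) * (1 - (s:ℂ)^2*(q:ℂ)^i)) /
        ((1 - (q:ℂ)^(1+i)) * (1 - (s:ℂ)^2*(q:ℂ)^(n-i-1)))‖
      ≤ ∏ i ∈ Finset.range j, (4/(3*(1-q)) + 1) := by
        refine Finset.prod_le_prod (fun i _ => norm_nonneg _) (fun i _ => ?_)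
        have hcast : ((1 - (q:ℂ)^(n-i)) * (1 - (s:ℂ)^2*(q:ℂ)^i)) /
            ((1 - (q:ℂ)^(1+i)) * (1 - (s:ℂ)^2*(q:ℂ)^(n-i-1)))
            = ((1 - ((q^(n-i) : ℝ) : ℂ)) * (1 - ((s^2*q^i : ℝ) : ℂ))) /
              ((1 - ((q^(1+i) : ℝ) : ℂ)) * (1 - ((s^2*q^(n-i-1) : ℝ) : ℂ))) := by
          push_cast; ring
        rw [hcast]
        refine norm_factor_le hq0 hq1 (pow_nonneg hq0.le _) (pow_le_one₀ hq0.le hq1.le)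
          (mul_nonneg (sq_nonneg s) (pow_nonneg hq0.le _)) ?_
          (pow_nonneg hq0.le _) ?_
          (mul_nonneg (sq_nonneg s) (pow_nonneg hq0.le _)) ?_
        · have h1 : s^2 ≤ 1 := by nlinarith [hs.1, hs.2]
          have h2 : q^i ≤ 1 := pow_le_one₀ hq0.le hq1.le
          nlinarith [sq_nonneg s, pow_nonneg hq0.le i]
        · calc q^(1+i) ≤ q^1 := pow_le_pow_of_le_one hq0.le hq1.le (by omega)
            _ = q := pow_one q
        · have h1 : s^2 ≤ 1/4 := by nlinarith [hs.1, hs.2]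
          have h2 : q^(n-i-1) ≤ 1 := pow_le_one₀ hq0.le hq1.le
          nlinarith [sq_nonneg s, pow_nonneg hq0.le (n-i-1)]
    _ ≤ (4/(3*(1-q)) + 1)^n := by
        rw [Finset.prod_const, Finset.card_range]
        exact pow_le_pow_right₀ (by linarith) hj

lemma norm_prodfac_le {q : ℝ} (hq0 : 0 < q) (hq1 : q < 1) {s : ℝ}
    (hs : s ∈ Set.Ioo (0:ℝ) (1/2)) (n : ℕ) :
    ‖∏ i ∈ Finset.range n,
        ((1 - (s:ℂ)^2*(q:ℂ)^i) * (1 - (s:ℂ)^2*(q:ℂ)^(i+1))) /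
        ((1 - ((s:ℂ)^2)^2*(q:ℂ)^i) * (1 - (q:ℂ)^(i+1)))‖
      ≤ (4/(3*(1-q)) + 1)^n := by
  rw [norm_prod]
  have hs2 : s^2 ≤ 1/4 := by nlinarith [hs.1, hs.2]
  have hs4 : (s^2)^2 ≤ 1/4 := by nlinarith [sq_nonneg s, hs.1, hs.2]
  calc ∏ i ∈ Finset.range n, ‖((1 - (s:ℂ)^2*(q:ℂ)^i) * (1 - (s:ℂ)^2*(q:ℂ)^(i+1))) /
        ((1 - ((s:ℂ)^2)^2*(q:ℂ)^i) * (1 - (q:ℂ)^(i+1)))‖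
      ≤ ∏ i ∈ Finset.range n, (4/(3*(1-q)) + 1) := by
        refine Finset.prod_le_prod (fun i _ => norm_nonneg _) (fun i _ => ?_)
        have hcast : ((1 - (s:ℂ)^2*(q:ℂ)^i) * (1 - (s:ℂ)^2*(q:ℂ)^(i+1))) /
            ((1 - ((s:ℂ)^2)^2*(q:ℂ)^i) * (1 - (q:ℂ)^(i+1)))
            = ((1 - ((s^2*q^i : ℝ) : ℂ)) * (1 - ((s^2*q^(i+1) : ℝ) : ℂ))) /
              ((1 - ((q^(i+1) : ℝ) : ℂ)) * (1 - (((s^2)^2*q^i : ℝ) : ℂ))) := by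
          push_cast; ring
        rw [hcast]
        refine norm_factor_le hq0 hq1
          (mul_nonneg (sq_nonneg s) (pow_nonneg hq0.le _)) ?_
          (mul_nonneg (sq_nonneg s) (pow_nonneg hq0.le _)) ?_
          (pow_nonneg hq0.le _) ?_
          (mul_nonneg (sq_nonneg (s^2)) (pow_nonneg hq0.le _)) ?_
        · have h2 : q^i ≤ 1 := pow_le_one₀ hq0.le hq1.le
          nlinarith [sq_nonneg s, pow_nonneg hq0.le i]
        · have h2 : q^(i+1) ≤ 1 := pow_le_one₀ hq0.le hq1.le
          nlinarith [sq_nonneg s, pow_nonneg hq0.le (i+1)]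
        · calc q^(i+1) ≤ q^1 := pow_le_pow_of_le_one hq0.le hq1.le (by omega)
            _ = q := pow_one q
        · have h2 : q^i ≤ 1 := pow_le_one₀ hq0.le hq1.le
          nlinarith [sq_nonneg (s^2), pow_nonneg hq0.le i]
    _ ≤ (4/(3*(1-q)) + 1)^n := by
        rw [Finset.prod_const, Finset.card_range]

lemma norm_spow_le {s : ℝ} (hs0 : 0 < s) (hs1 : s < 1) (k : ℕ) :
    ‖(s:ℂ)^k‖ ≤ 1 := by
  rw [norm_pow, Complex.norm_real, Real.norm_eq_abs, abs_of_pos hs0]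
  exact pow_le_one₀ hs0.le hs1.le

lemma norm_sn_msym_le (X : ℂ) (hX : X ≠ 0) {s : ℝ} (hs0 : 0 < s) (hs1 : s < 1)
    {r n : ℕ} (hr : r ≤ n) :
    ‖(s:ℂ)^n * Msym r (X/(s:ℂ))‖ ≤ 2 * (max (max ‖X‖ ‖X⁻¹‖) 1)^n := by
  set C := max (max ‖X‖ ‖X⁻¹‖) 1 with hC
  have hC1 : (1:ℝ) ≤ C := le_max_right _ _
  have hCn : (1:ℝ) ≤ C ^ n := one_le_pow₀ hC1
  have hs0' : (s:ℂ) ≠ 0 := by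
    simpa using ne_of_gt hs0
  rw [keyMsym hs0' hX hr]
  rcases Nat.eq_zero_or_pos r with h | h
  · rw [if_pos h]
    calc ‖(s:ℂ)^n‖ ≤ 1 := norm_spow_le hs0 hs1 n
      _ ≤ 2 * C^n := by linarith
  rw [if_neg (by omega : ¬ r = 0)]
  have hXr : ‖X‖^r ≤ C^n :=
    le_trans (pow_le_pow_left₀ (norm_nonneg _) (le_trans (le_max_left _ _) (le_max_left _ _)) r)
      (pow_le_pow_right₀ hC1 hr)
  have hXr' : ‖X⁻¹‖^r ≤ C^n :=
    le_trans (pow_le_pow_left₀ (norm_nonneg _) (le_trans (le_max_right _ _) (le_max_left _ _)) r)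
      (pow_le_pow_right₀ hC1 hr)
  calc ‖(s:ℂ)^(n-r) * X^r + (s:ℂ)^(n+r) * X⁻¹^r‖
      ≤ ‖(s:ℂ)^(n-r) * X^r‖ + ‖(s:ℂ)^(n+r) * X⁻¹^r‖ := norm_add_le _ _
    _ = ‖(s:ℂ)^(n-r)‖ * ‖X‖^r + ‖(s:ℂ)^(n+r)‖ * ‖X⁻¹‖^r := by
        simp [norm_mul, norm_pow]
    _ ≤ 1 * C^n + 1 * C^n := by
        have h1 := norm_spow_le hs0 hs1 (n-r)
        have h2 := norm_spow_le hs0 hs1 (n+r)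
        have n1 : (0:ℝ) ≤ ‖(s:ℂ)^(n-r)‖ := norm_nonneg _
        have n2 : (0:ℝ) ≤ ‖(s:ℂ)^(n+r)‖ := norm_nonneg _
        have p1 : (0:ℝ) ≤ ‖X‖^r := pow_nonneg (norm_nonneg _) _
        have p2 : (0:ℝ) ≤ ‖X⁻¹‖^r := pow_nonneg (norm_nonneg _) _
        have := mul_le_mul h1 hXr p1 (by norm_num : (0:ℝ) ≤ 1)
        have := mul_le_mul h2 hXr' p2 (by norm_num : (0:ℝ) ≤ 1)
        gcongr <;> nlinarith
    _ = 2 * C^n := by ring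

lemma norm_sn_rogersX_le {q : ℝ} (hq0 : 0 < q) (hq1 : q < 1) (X : ℂ) (hX : X ≠ 0)
    {s : ℝ} (hs : s ∈ Set.Ioo (0:ℝ) (1/2)) (n : ℕ) :
    ‖(s:ℂ)^n * RogersA1 q ((s:ℂ)^2) n (X/(s:ℂ))‖
      ≤ 2 * (n+1) * ((4/(3*(1-q)) + 1) * max (max ‖X‖ ‖X⁻¹‖) 1)^n := by
  set K := 4/(3*(1-q)) + 1 with hKdef
  set C := max (max ‖X‖ ‖X⁻¹‖) 1 with hC
  have hK1 : (1:ℝ) ≤ K := by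
    have : (0:ℝ) < 4/(3*(1-q)) := div_pos (by norm_num) (by linarith)
    rw [hKdef]; linarith
  have hC1 : (1:ℝ) ≤ C := le_max_right _ _
  have hKn : (1:ℝ) ≤ K ^ n := one_le_pow₀ hK1
  have hs0 : (0:ℝ) < s := hs.1
  have hs1 : s < 1 := by
    have := hs.2; linarith
  rw [RogersA1, mul_add, Finset.mul_sum]
  calc ‖(s:ℂ)^n * Msym n (X/(s:ℂ)) + ∑ j ∈ Finset.Icc 1 (n / 2), (s:ℂ)^n *
        ((∏ i ∈ Finset.range j,
          ((1 - (q:ℂ)^(n-i)) * (1 - (s:ℂ)^2*(q:ℂ)^i)) /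
          ((1 - (q:ℂ)^(1+i)) * (1 - (s:ℂ)^2*(q:ℂ)^(n-i-1)))) * Msym (n - 2*j) (X/(s:ℂ)))‖
      ≤ ‖(s:ℂ)^n * Msym n (X/(s:ℂ))‖ + ∑ j ∈ Finset.Icc 1 (n / 2), ‖(s:ℂ)^n *
        ((∏ i ∈ Finset.range j,
          ((1 - (q:ℂ)^(n-i)) * (1 - (s:ℂ)^2*(q:ℂ)^i)) /
          ((1 - (q:ℂ)^(1+i)) * (1 - (s:ℂ)^2*(q:ℂ)^(n-i-1)))) * Msym (n - 2*j) (X/(s:ℂ)))‖ :=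
        norm_add_le_of_le le_rfl (norm_sum_le _ _)
    _ ≤ 2*C^n + ∑ j ∈ Finset.Icc 1 (n / 2), K^n * (2*C^n) := by
        gcongr with j hj
        · exact norm_sn_msym_le X hX hs0 hs1 le_rfl
        · simp only [Finset.mem_Icc] at hj
          have hjn : j ≤ n := by omega
          calc ‖(s:ℂ)^n * ((∏ i ∈ Finset.range j,
              ((1 - (q:ℂ)^(n-i)) * (1 - (s:ℂ)^2*(q:ℂ)^i)) /
              ((1 - (q:ℂ)^(1+i)) * (1 - (s:ℂ)^2*(q:ℂ)^(n-i-1)))) * Msym (n - 2*j) (X/(s:ℂ)))‖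
              = ‖∏ i ∈ Finset.range j,
              ((1 - (q:ℂ)^(n-i)) * (1 - (s:ℂ)^2*(q:ℂ)^i)) /
              ((1 - (q:ℂ)^(1+i)) * (1 - (s:ℂ)^2*(q:ℂ)^(n-i-1)))‖ *
                ‖(s:ℂ)^n * Msym (n - 2*j) (X/(s:ℂ))‖ := by
                rw [mul_left_comm, norm_mul]
            _ ≤ K^n * (2*C^n) := by
                refine mul_le_mul (norm_coeff_le hq0 hq1 hs n hjn)
                  (norm_sn_msym_le X hX hs0 hs1 (Nat.sub_le n (2*j)))
                  (norm_nonneg _) (by positivity)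
    _ ≤ 2*C^n + n * (K^n * (2*C^n)) := by
        rw [Finset.sum_const, Nat.card_Icc, nsmul_eq_mul]
        have hcard : ((n/2 + 1 - 1 : ℕ) : ℝ) ≤ (n : ℝ) := by
          exact_mod_cast (show n/2 + 1 - 1 ≤ n by omega)
        have hpos : (0:ℝ) ≤ K^n * (2*C^n) := by positivity
        have := mul_le_mul_of_nonneg_right hcard hpos
        linarith
    _ ≤ 2 * (n+1) * (K * C)^n := by
        rw [mul_pow]
        have hCn : (1:ℝ) ≤ C ^ n := one_le_pow₀ hC1
        nlinarith [pow_nonneg (by linarith : (0:ℝ) ≤ K) n, pow_nonneg (by positivity : (0:ℝ) ≤ C) n]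

lemma norm_rogersL_le {q : ℝ} (hq0 : 0 < q) (hq1 : q < 1) (Λ : ℂ)
    {s : ℝ} (hs : s ∈ Set.Ioo (0:ℝ) (1/2)) (n : ℕ) :
    ‖RogersA1 q ((s:ℂ)^2) n Λ‖
      ≤ 2 * (n+1) * ((4/(3*(1-q)) + 1) * max (max ‖Λ‖ ‖Λ⁻¹‖) 1)^n := by
  set K := 4/(3*(1-q)) + 1 with hKdef
  set C := max (max ‖Λ‖ ‖Λ⁻¹‖) 1 with hC
  have hK1 : (1:ℝ) ≤ K := by
    have : (0:ℝ) < 4/(3*(1-q)) := div_pos (by norm_num) (by linarith)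
    rw [hKdef]; linarith
  have hC1 : (1:ℝ) ≤ C := le_max_right _ _
  have hKn : (1:ℝ) ≤ K ^ n := one_le_pow₀ hK1
  have hCn : (1:ℝ) ≤ C ^ n := one_le_pow₀ hC1
  rw [RogersA1]
  calc ‖Msym n Λ + ∑ j ∈ Finset.Icc 1 (n / 2),
        (∏ i ∈ Finset.range j,
          ((1 - (q:ℂ)^(n-i)) * (1 - (s:ℂ)^2*(q:ℂ)^i)) /
          ((1 - (q:ℂ)^(1+i)) * (1 - (s:ℂ)^2*(q:ℂ)^(n-i-1)))) * Msym (n - 2*j) Λ‖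
      ≤ ‖Msym n Λ‖ + ∑ j ∈ Finset.Icc 1 (n / 2),
        ‖(∏ i ∈ Finset.range j,
          ((1 - (q:ℂ)^(n-i)) * (1 - (s:ℂ)^2*(q:ℂ)^i)) /
          ((1 - (q:ℂ)^(1+i)) * (1 - (s:ℂ)^2*(q:ℂ)^(n-i-1)))) * Msym (n - 2*j) Λ‖ :=
        norm_add_le_of_le le_rfl (norm_sum_le _ _)
    _ ≤ 2*C^n + ∑ j ∈ Finset.Icc 1 (n / 2), K^n * (2*C^n) := by
        gcongr with j hj
        · exact norm_Msym_le Λ le_rfl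
        · simp only [Finset.mem_Icc] at hj
          rw [norm_mul]
          exact mul_le_mul (norm_coeff_le hq0 hq1 hs n (by omega))
            (norm_Msym_le Λ (Nat.sub_le n (2*j))) (norm_nonneg _) (by positivity)
    _ ≤ 2*C^n + n * (K^n * (2*C^n)) := by
        rw [Finset.sum_const, Nat.card_Icc, nsmul_eq_mul]
        have hcard : ((n/2 + 1 - 1 : ℕ) : ℝ) ≤ (n : ℝ) := by
          exact_mod_cast (show n/2 + 1 - 1 ≤ n by omega)
        have hpos : (0:ℝ) ≤ K^n * (2*C^n) := by positivity
        have := mul_le_mul_of_nonneg_right hcard hpos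
        linarith
    _ ≤ 2 * (n+1) * (K * C)^n := by
        rw [mul_pow]
        nlinarith [pow_nonneg (by linarith : (0:ℝ) ≤ K) n,
          pow_nonneg (by positivity : (0:ℝ) ≤ C) n]

lemma aux_id (x y a b c : ℝ) (n : ℕ) :
    x * ((2*y*(a*b)^n) * (2*y*(a*c)^n) * a^n) = x * (4*y^2*(a^3*b*c)^n) := by
  rw [mul_pow, mul_pow, mul_pow, mul_pow,
    show (a^3)^n = a^n*(a^n*a^n) by
      rw [← pow_mul, show 3*n = n+(n+n) by ring, pow_add, pow_add]]
  ring

lemma norm_term_le {q : ℝ} (hq0 : 0 < q) (hq1 : q < 1) (X Λ : ℂ) (hX : X ≠ 0)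
    {s : ℝ} (hs : s ∈ Set.Ioo (0:ℝ) (1/2)) (n : ℕ) :
    ‖(s:ℂ)^n * ((q ^ ((n:ℝ)^2/4) : ℝ) : ℂ) *
        RogersA1 q ((s:ℂ)^2) n (X/(s:ℂ)) * RogersA1 q ((s:ℂ)^2) n Λ *
        ∏ i ∈ Finset.range n,
          ((1 - (s:ℂ)^2*(q:ℂ)^i) * (1 - (s:ℂ)^2*(q:ℂ)^(i+1))) /
          ((1 - ((s:ℂ)^2)^2*(q:ℂ)^i) * (1 - (q:ℂ)^(i+1)))‖
      ≤ q ^ ((n:ℝ)^2/4) *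
        (4 * (n+1)^2 * ((4/(3*(1-q)) + 1)^3 * max (max ‖X‖ ‖X⁻¹‖) 1 *
          max (max ‖Λ‖ ‖Λ⁻¹‖) 1)^n) := by
  set K := 4/(3*(1-q)) + 1 with hKdef
  set CX := max (max ‖X‖ ‖X⁻¹‖) 1 with hCX
  set CL := max (max ‖Λ‖ ‖Λ⁻¹‖) 1 with hCL
  have hK0 : (0:ℝ) < K := by
    have : (0:ℝ) < 4/(3*(1-q)) := div_pos (by norm_num) (by linarith)
    rw [hKdef]; linarith
  have hqf : ‖(((q ^ ((n:ℝ)^2/4) : ℝ)) : ℂ)‖ = q ^ ((n:ℝ)^2/4) := by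
    rw [Complex.norm_real, Real.norm_eq_abs, abs_of_pos (Real.rpow_pos_of_pos hq0 _)]
  have h1 := norm_sn_rogersX_le hq0 hq1 X hX hs n
  have h2 := norm_rogersL_le hq0 hq1 Λ hs n
  have h3 := norm_prodfac_le hq0 hq1 hs n
  calc ‖(s:ℂ)^n * ((q ^ ((n:ℝ)^2/4) : ℝ) : ℂ) *
        RogersA1 q ((s:ℂ)^2) n (X/(s:ℂ)) * RogersA1 q ((s:ℂ)^2) n Λ *
        ∏ i ∈ Finset.range n,
          ((1 - (s:ℂ)^2*(q:ℂ)^i) * (1 - (s:ℂ)^2*(q:ℂ)^(i+1))) /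
          ((1 - ((s:ℂ)^2)^2*(q:ℂ)^i) * (1 - (q:ℂ)^(i+1)))‖
      = q ^ ((n:ℝ)^2/4) * (‖(s:ℂ)^n * RogersA1 q ((s:ℂ)^2) n (X/(s:ℂ))‖ *
        ‖RogersA1 q ((s:ℂ)^2) n Λ‖ *
        ‖∏ i ∈ Finset.range n,
          ((1 - (s:ℂ)^2*(q:ℂ)^i) * (1 - (s:ℂ)^2*(q:ℂ)^(i+1))) /
          ((1 - ((s:ℂ)^2)^2*(q:ℂ)^i) * (1 - (q:ℂ)^(i+1)))‖) := by
        rw [show (s:ℂ)^n * ((q ^ ((n:ℝ)^2/4) : ℝ) : ℂ) *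
          RogersA1 q ((s:ℂ)^2) n (X/(s:ℂ)) * RogersA1 q ((s:ℂ)^2) n Λ *
          ∏ i ∈ Finset.range n,
            ((1 - (s:ℂ)^2*(q:ℂ)^i) * (1 - (s:ℂ)^2*(q:ℂ)^(i+1))) /
            ((1 - ((s:ℂ)^2)^2*(q:ℂ)^i) * (1 - (q:ℂ)^(i+1)))
          = ((q ^ ((n:ℝ)^2/4) : ℝ) : ℂ) * (((s:ℂ)^n * RogersA1 q ((s:ℂ)^2) n (X/(s:ℂ))) *
            RogersA1 q ((s:ℂ)^2) n Λ *
            ∏ i ∈ Finset.range n,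
              ((1 - (s:ℂ)^2*(q:ℂ)^i) * (1 - (s:ℂ)^2*(q:ℂ)^(i+1))) /
              ((1 - ((s:ℂ)^2)^2*(q:ℂ)^i) * (1 - (q:ℂ)^(i+1))) ) by ring]
        rw [norm_mul, hqf, norm_mul, norm_mul]
    _ ≤ q ^ ((n:ℝ)^2/4) * ((2 * (n+1) * (K * CX)^n) * (2 * (n+1) * (K * CL)^n) * K^n) := by
        have hq4 : (0:ℝ) ≤ q ^ ((n:ℝ)^2/4) := (Real.rpow_pos_of_pos hq0 _).le
        refine mul_le_mul_of_nonneg_left ?_ hq4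
        refine mul_le_mul (mul_le_mul h1 h2 (norm_nonneg _) (by positivity))
          h3 (norm_nonneg _) (by positivity)
    _ = q ^ ((n:ℝ)^2/4) * (4 * (n+1)^2 * (K^3 * CX * CL)^n) :=
        aux_id _ _ _ _ _ n

set_option maxHeartbeats 1000000 in
lemma bound_summable {q : ℝ} (hq0 : 0 < q) (hq1 : q < 1) (A : ℝ) (hA : 1 ≤ A) :
    Summable (fun n : ℕ => q ^ ((n:ℝ)^2/4) * (4 * (n+1)^2 * A^n)) := by
  have hA0 : (0:ℝ) < A := by linarith
  set r := q ^ ((1:ℝ)/4) with hr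
  have hr0 : (0:ℝ) < r := Real.rpow_pos_of_pos hq0 _
  have hr1 : r < 1 := Real.rpow_lt_one hq0.le hq1 (by norm_num)
  have hq : ∀ n : ℕ, q ^ ((n:ℝ)^2/4) = r^(n*n) := by
    intro n
    rw [hr, ← Real.rpow_natCast (q ^ ((1:ℝ)/4)) (n*n), ← Real.rpow_mul hq0.le]
    congr 1
    push_cast
    ring
  obtain ⟨N, hN⟩ := exists_pow_lt_of_lt_one (show (0:ℝ) < 1/(2*A) by positivity) hr1
  have hg : Summable (fun n : ℕ => 4 * ((n:ℝ)+1)^2 * (1/2:ℝ)^n) := by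
    have h := summable_pow_mul_geometric_of_norm_lt_one (R := ℝ) 2
      (r := (1/2:ℝ)) (by
        rw [Real.norm_eq_abs, abs_of_pos (by norm_num : (0:ℝ) < 1/2)]
        norm_num)
    have h1 := (summable_nat_add_iff (f := fun n : ℕ => ((n:ℕ):ℝ)^2 * (1/2:ℝ)^n) 1).2 h
    refine (h1.mul_left 8).congr fun n => ?_
    push_cast
    ring
  have key : ∀ n, N ≤ n → q ^ ((n:ℝ)^2/4) * (4 * (n+1)^2 * A^n)
      ≤ 4 * ((n:ℝ)+1)^2 * (1/2:ℝ)^n := by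
    intro n hNn
    have hrn : r^n ≤ r^N := pow_le_pow_of_le_one hr0.le hr1.le hNn
    have hle : r^n * A ≤ 1/2 := by
      have h2 : r^N * A < (1/(2*A)) * A := mul_lt_mul_of_pos_right hN hA0
      have h3 : (1/(2*A)) * A = 1/2 := by field_simp
      have h4 : r^n * A ≤ r^N * A := mul_le_mul_of_nonneg_right hrn hA0.le
      linarith
    have hpow : (r^n * A)^n ≤ (1/2:ℝ)^n :=
      pow_le_pow_left₀ (mul_nonneg (pow_nonneg hr0.le n) hA0.le) hle n
    have hrew : q ^ ((n:ℝ)^2/4) * (4 * (n+1)^2 * A^n)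
        = 4 * ((n:ℝ)+1)^2 * (r^n * A)^n := by
      rw [hq n, mul_pow, ← pow_mul]
      ring
    rw [hrew]
    have : (0:ℝ) ≤ 4 * ((n:ℝ)+1)^2 := by positivity
    exact mul_le_mul_of_nonneg_left hpow this
  refine (summable_nat_add_iff N).1 ?_
  refine Summable.of_nonneg_of_le (fun m => ?_) (fun m => key (m+N) (by omega))
    ((summable_nat_add_iff N).2 hg)
  exact mul_nonneg (Real.rpow_pos_of_pos hq0 _).le
    (mul_nonneg (by positivity) (pow_nonneg (by linarith) _))

end Helpers

/-- the Whittaker limit of the global q,t-spherical function of type A₁. -/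
theorem sphA1_whittaker_limit (q : ℝ) (hq0 : 0 < q) (hq1 : q < 1)
    (X Λ : ℂ) (hX : X ≠ 0) (hΛ : Λ ≠ 0) :
    Filter.Tendsto (fun s : ℝ => sphA1 q s (X / (s : ℂ)) Λ)
      (nhdsWithin 0 (Set.Ioo 0 1)) (nhds (whitA1 q X Λ)) := by
  have hK1 : (1:ℝ) ≤ 4/(3*(1-q)) + 1 := by
    have : (0:ℝ) < 4/(3*(1-q)) := div_pos (by norm_num) (by linarith)
    linarith
  have hA1 : (1:ℝ) ≤ (4/(3*(1-q)) + 1)^3 * max (max ‖X‖ ‖X⁻¹‖) 1 * max (max ‖Λ‖ ‖Λ⁻¹‖) 1 := by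
    have h1 : (1:ℝ) ≤ (4/(3*(1-q)) + 1)^3 := one_le_pow₀ hK1
    have h2 : (1:ℝ) ≤ max (max ‖X‖ ‖X⁻¹‖) 1 := le_max_right _ _
    have h3 : (1:ℝ) ≤ max (max ‖Λ‖ ‖Λ⁻¹‖) 1 := le_max_right _ _
    have h12 := mul_le_mul h1 h2 zero_le_one
      (by linarith : (0:ℝ) ≤ (4/(3*(1-q)) + 1)^3)
    have h123 := mul_le_mul h12 h3 zero_le_one
      (by nlinarith : (0:ℝ) ≤ (4/(3*(1-q)) + 1)^3 * max (max ‖X‖ ‖X⁻¹‖) 1)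
    simpa using h123
  have hsum := bound_summable hq0 hq1
    ((4/(3*(1-q)) + 1)^3 * max (max ‖X‖ ‖X⁻¹‖) 1 * max (max ‖Λ‖ ‖Λ⁻¹‖) 1) hA1
  have hmem : Set.Ioo (0:ℝ) (1/2) ∈ nhdsWithin (0:ℝ) (Set.Ioo (0:ℝ) 1) := by
    rw [mem_nhdsWithin]
    refine ⟨Set.Iio (1/2), isOpen_Iio, by norm_num, ?_⟩
    rintro x ⟨hx1, hx2, _⟩
    exact ⟨hx2, hx1⟩
  have hbd : ∀ᶠ s : ℝ in nhdsWithin (0:ℝ) (Set.Ioo (0:ℝ) 1), ∀ n : ℕ,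
      ‖(s:ℂ)^n * ((q ^ ((n:ℝ)^2/4) : ℝ) : ℂ) *
        RogersA1 q ((s:ℂ)^2) n (X/(s:ℂ)) * RogersA1 q ((s:ℂ)^2) n Λ *
        ∏ i ∈ Finset.range n,
          ((1 - (s:ℂ)^2*(q:ℂ)^i) * (1 - (s:ℂ)^2*(q:ℂ)^(i+1))) /
          ((1 - ((s:ℂ)^2)^2*(q:ℂ)^i) * (1 - (q:ℂ)^(i+1)))‖
      ≤ q ^ ((n:ℝ)^2/4) * (4 * (n+1)^2 *
        ((4/(3*(1-q)) + 1)^3 * max (max ‖X‖ ‖X⁻¹‖) 1 * max (max ‖Λ‖ ‖Λ⁻¹‖) 1)^n) := by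
    filter_upwards [hmem] with s hs n
    exact norm_term_le hq0 hq1 X Λ hX hs n
  have hpt : ∀ n : ℕ, Filter.Tendsto (fun s : ℝ => (s:ℂ)^n * ((q ^ ((n:ℝ)^2/4) : ℝ) : ℂ) *
      RogersA1 q ((s:ℂ)^2) n (X/(s:ℂ)) * RogersA1 q ((s:ℂ)^2) n Λ *
      ∏ i ∈ Finset.range n,
        ((1 - (s:ℂ)^2*(q:ℂ)^i) * (1 - (s:ℂ)^2*(q:ℂ)^(i+1))) /
        ((1 - ((s:ℂ)^2)^2*(q:ℂ)^i) * (1 - (q:ℂ)^(i+1))))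
      (nhdsWithin (0:ℝ) (Set.Ioo (0:ℝ) 1))
      (nhds (((q ^ ((n:ℝ)^2/4) : ℝ) : ℂ) * X^n * PbarA1 q n Λ /
        ∏ j ∈ Finset.Icc 1 n, (1 - (q:ℂ)^j))) :=
    fun n => tendsto_term q hq0 hq1 X Λ hX n
  have H := tendsto_tsum_of_dominated_convergence hsum hpt hbd
  exact H

end
end
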